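/- arXiv:2605.18306 — 3 statements merged into one kernel-verified Lean document; each statement's English description precedes it below -/
import Mathlib

section
/- Let E be an odd exact Courant algebroid over an n-dimensional manifold M, let 𝓕 be a B_n-generalized almost complex structure on E and U := Ker 𝓕. Then 𝓕 is integrable if and only if its Nijenhuis tensor N_𝓕, defined on sections of U^⊥ by N_𝓕(u,v) := [𝓕u,𝓕v] − [u,v] − 𝓕([𝓕u,v] + [u,𝓕v]), vanishes identically on U^⊥ × U^⊥. -/
/-! Common framework: Courant algebroids over a smooth manifold, described through
their fibers, their (smooth) sections, scalar product, anchor and Dorfman bracket;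
generalized connections, torsion, generalized metrics, `Bₙ`-generalized almost
complex structures on odd exact Courant algebroids, and generalized complex
structures on Courant algebroids of even rank. -/

open Manifold

noncomputable section

/-- A bilinear symmetric form on a real vector space has signature `(p, q)`. -/
def BilinSignature {V : Type*} [AddCommGroup V] [Module ℝ V]
    (g : V →ₗ[ℝ] V →ₗ[ℝ] ℝ) (p q : ℕ) : Prop :=
  ∃ P N : Submodule ℝ V, IsCompl P N ∧
    (∀ v ∈ P, ∀ w ∈ N, g v w = 0) ∧
    Module.finrank ℝ P = p ∧ Module.finrank ℝ N = q ∧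
    (∀ v ∈ P, v ≠ 0 → 0 < g v v) ∧ (∀ v ∈ N, v ≠ 0 → g v v < 0)

/-- The derivative `(π(u)f)(x)` of a function `f` in the direction of a tangent vector. -/
def mdirDeriv {m : ℕ} {M : Type*} [TopologicalSpace M]
    [ChartedSpace (EuclideanSpace ℝ (Fin m)) M]
    [IsManifold (𝓡 m) (⊤ : ℕ∞) M]
    (f : M → ℝ) (x : M) (v : TangentSpace (𝓡 m) x) : ℝ :=
  mfderiv (𝓡 m) 𝓘(ℝ, ℝ) f x v

/-- A Courant algebroid over an `m`-dimensional manifold `M`, presented by the data of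
its fibers, its smooth sections, its fiberwise scalar product `⟨·,·⟩`, its anchor
`π : E → TM` and its (Dorfman) bracket `[·,·]` on sections, subject to the axioms
`[u,[v,w]] = [[u,v],w] + [v,[u,w]]`, `[u,fv] = f[u,v] + (π(u)f)v`,
`π(u)⟨v,w⟩ = ⟨[u,v],w⟩ + ⟨v,[u,w]⟩` and `⟨[u,v]+[v,u],w⟩ = π(w)⟨u,v⟩`. -/
structure CourantAlgebroid (m : ℕ) (M : Type*) [TopologicalSpace M]
    [ChartedSpace (EuclideanSpace ℝ (Fin m)) M]
    [IsManifold (𝓡 m) (⊤ : ℕ∞) M] where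
  /-- the fiber of the vector bundle `E` at `x ∈ M` -/
  Fib : M → Type
  [fibAdd : ∀ x, AddCommGroup (Fib x)]
  [fibMod : ∀ x, Module ℝ (Fib x)]
  [fibFin : ∀ x, FiniteDimensional ℝ (Fib x)]
  /-- the set `Γ(E)` of smooth sections of `E` -/
  secs : Set (∀ x, Fib x)
  secs_zero : (fun x => (0 : Fib x)) ∈ secs
  secs_add : ∀ {u v}, u ∈ secs → v ∈ secs → (fun x => u x + v x) ∈ secs
  secs_neg : ∀ {u}, u ∈ secs → (fun x => -(u x)) ∈ secs
  secs_smul : ∀ {f : M → ℝ}, ContMDiff (𝓡 m) 𝓘(ℝ, ℝ) (⊤ : ℕ∞) f →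
    ∀ {u}, u ∈ secs → (fun x => f x • u x) ∈ secs
  /-- the scalar product `⟨·,·⟩` -/
  g : ∀ x, Fib x →ₗ[ℝ] Fib x →ₗ[ℝ] ℝ
  g_symm : ∀ x u v, g x u v = g x v u
  g_nondeg : ∀ x (v : Fib x), (∀ w, g x v w = 0) → v = 0
  g_smooth : ∀ {u v}, u ∈ secs → v ∈ secs →
    ContMDiff (𝓡 m) 𝓘(ℝ, ℝ) (⊤ : ℕ∞) (fun x => g x (u x) (v x))
  /-- the anchor `π : E → TM` -/
  anchor : ∀ x, Fib x →ₗ[ℝ] TangentSpace (𝓡 m) x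
  anchor_smooth : ∀ {u}, u ∈ secs →
    ContMDiff (𝓡 m) (𝓡 m).tangent (⊤ : ℕ∞)
      (fun x => (⟨x, anchor x (u x)⟩ : TangentBundle (𝓡 m) M))
  /-- the Dorfman bracket `[·,·]` -/
  bracket : (∀ x, Fib x) → (∀ x, Fib x) → (∀ x, Fib x)
  bracket_secs : ∀ {u v}, u ∈ secs → v ∈ secs → bracket u v ∈ secs
  bracket_add_left : ∀ {u v w}, u ∈ secs → v ∈ secs → w ∈ secs →
    bracket (fun x => u x + v x) w = fun x => bracket u w x + bracket v w x
  bracket_add_right : ∀ {u v w}, u ∈ secs → v ∈ secs → w ∈ secs →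
    bracket u (fun x => v x + w x) = fun x => bracket u v x + bracket u w x
  bracket_smul_left : ∀ (c : ℝ) {u v}, u ∈ secs → v ∈ secs →
    bracket (fun x => c • u x) v = fun x => c • bracket u v x
  bracket_smul_right : ∀ (c : ℝ) {u v}, u ∈ secs → v ∈ secs →
    bracket u (fun x => c • v x) = fun x => c • bracket u v x
  /-- `[u,[v,w]] = [[u,v],w] + [v,[u,w]]` -/
  jacobi : ∀ {u v w}, u ∈ secs → v ∈ secs → w ∈ secs →
    bracket u (bracket v w)
      = fun x => bracket (bracket u v) w x + bracket v (bracket u w) x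
  /-- `[u,fv] = f[u,v] + (π(u)f) v` -/
  leibniz : ∀ {f : M → ℝ}, ContMDiff (𝓡 m) 𝓘(ℝ, ℝ) (⊤ : ℕ∞) f → ∀ {u v},
    u ∈ secs → v ∈ secs →
    bracket u (fun x => f x • v x)
      = fun x => f x • bracket u v x
          + mdirDeriv f x (anchor x (u x)) • v x
  /-- `π(u)⟨v,w⟩ = ⟨[u,v],w⟩ + ⟨v,[u,w]⟩` -/
  compat : ∀ {u v w}, u ∈ secs → v ∈ secs → w ∈ secs → ∀ x,
    mdirDeriv (fun y => g y (v y) (w y)) x (anchor x (u x))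
      = g x (bracket u v x) (w x) + g x (v x) (bracket u w x)
  /-- `⟨[u,v]+[v,u],w⟩ = π(w)⟨u,v⟩` -/
  symBracket : ∀ {u v w}, u ∈ secs → v ∈ secs → w ∈ secs → ∀ x,
    g x (bracket u v x + bracket v u x) (w x)
      = mdirDeriv (fun y => g y (u y) (v y)) x (anchor x (w x))

attribute [instance] CourantAlgebroid.fibAdd CourantAlgebroid.fibMod CourantAlgebroid.fibFin

/-- An odd exact Courant algebroid over an `n`-dimensional manifold: a Courant algebroid
of rank `2n+1` whose scalar product has signature `(n+1, n)`. -/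
structure OddExactCourantAlgebroid (n : ℕ) (M : Type*) [TopologicalSpace M]
    [ChartedSpace (EuclideanSpace ℝ (Fin n)) M]
    [IsManifold (𝓡 n) (⊤ : ℕ∞) M]
    extends CourantAlgebroid n M where
  rank_eq : ∀ x, Module.finrank ℝ (Fib x) = 2 * n + 1
  g_sig : ∀ x, BilinSignature (g x) (n + 1) n

variable {m : ℕ} {M : Type*} [TopologicalSpace M]
  [ChartedSpace (EuclideanSpace ℝ (Fin m)) M]
  [IsManifold (𝓡 m) (⊤ : ℕ∞) M]

/-- A generalized connection `D` on a Courant algebroid: `D_v (f u) = (π(v)f) u + f D_v u`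
and `π(w)⟨u,v⟩ = ⟨D_w u, v⟩ + ⟨u, D_w v⟩`; moreover `D_v u` is tensorial
(`C^∞(M)`-linear) in the direction `v`. `D.D v u` denotes `D_v u`. -/
structure GenConnection (E : CourantAlgebroid m M) where
  D : (∀ x, E.Fib x) → (∀ x, E.Fib x) → (∀ x, E.Fib x)
  d_secs : ∀ {v u}, v ∈ E.secs → u ∈ E.secs → D v u ∈ E.secs
  add_dir : ∀ {v w u}, v ∈ E.secs → w ∈ E.secs → u ∈ E.secs →
    D (fun x => v x + w x) u = fun x => D v u x + D w u x
  smul_dir : ∀ {f : M → ℝ}, ContMDiff (𝓡 m) 𝓘(ℝ, ℝ) (⊤ : ℕ∞) f → ∀ {v u},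
    v ∈ E.secs → u ∈ E.secs →
    D (fun x => f x • v x) u = fun x => f x • D v u x
  add_sec : ∀ {v u w}, v ∈ E.secs → u ∈ E.secs → w ∈ E.secs →
    D v (fun x => u x + w x) = fun x => D v u x + D v w x
  smul_sec : ∀ (c : ℝ) {v u}, v ∈ E.secs → u ∈ E.secs →
    D v (fun x => c • u x) = fun x => c • D v u x
  leibniz : ∀ {f : M → ℝ}, ContMDiff (𝓡 m) 𝓘(ℝ, ℝ) (⊤ : ℕ∞) f → ∀ {v u},
    v ∈ E.secs → u ∈ E.secs →
    D v (fun x => f x • u x)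
      = fun x => mdirDeriv f x (E.anchor x (v x)) • u x + f x • D v u x
  metric : ∀ {u v w}, u ∈ E.secs → v ∈ E.secs → w ∈ E.secs → ∀ x,
    mdirDeriv (fun y => E.g y (u y) (v y)) x (E.anchor x (w x))
      = E.g x (D w u x) (v x) + E.g x (u x) (D w v x)

namespace GenConnection

variable {E : CourantAlgebroid m M}

/-- The torsion `T^D(u,v,w) = ⟨D_u v − D_v u − [u,v], w⟩ + ⟨D_w u, v⟩` of a generalized
connection. -/
def torsion (D : GenConnection E) (u v w : ∀ x, E.Fib x) : M → ℝ :=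
  fun x => E.g x (D.D u v x - D.D v u x - E.bracket u v x) (w x) + E.g x (D.D w u x) (v x)

/-- A generalized connection is torsion-free if its torsion vanishes. -/
def TorsionFree (D : GenConnection E) : Prop :=
  ∀ {u v w}, u ∈ E.secs → v ∈ E.secs → w ∈ E.secs → ∀ x, D.torsion u v w x = 0

/-- `D` preserves the endomorphism (field) `F`, i.e. `DF = 0`:
`(D_u F) v = D_u (F v) − F (D_u v) = 0` for all sections `u`, `v`. -/
def PreservesEnd (D : GenConnection E) (F : ∀ x, E.Fib x →ₗ[ℝ] E.Fib x) : Prop :=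
  ∀ {u v}, u ∈ E.secs → v ∈ E.secs → ∀ x, D.D u (fun y => F y (v y)) x = F x (D.D u v x)

/-- `D` preserves the section `s`, i.e. `Ds = 0`. -/
def PreservesSec (D : GenConnection E) (s : ∀ x, E.Fib x) : Prop :=
  ∀ {v}, v ∈ E.secs → ∀ x, D.D v s x = 0

end GenConnection

/-- The i-eigenbundle `L ⊂ E^ℂ` of a family `F` of endomorphisms has its space of
sections closed under the (complexified) Dorfman bracket.  A complex section
`s = u + iv` of `E^ℂ` lies in `Γ(L)` iff `F u = -v` and `F v = u`; the bracket of
`u + iv` and `u' + iv'` is `([u,u'] - [v,v']) + i([u,v'] + [v,u'])`. -/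
def CourantAlgebroid.IntegrableF (E : CourantAlgebroid m M)
    (F : ∀ x, E.Fib x →ₗ[ℝ] E.Fib x) : Prop :=
  ∀ {u v u' v'}, u ∈ E.secs → v ∈ E.secs → u' ∈ E.secs → v' ∈ E.secs →
    (∀ x, F x (u x) = -(v x)) → (∀ x, F x (v x) = u x) →
    (∀ x, F x (u' x) = -(v' x)) → (∀ x, F x (v' x) = u' x) →
    (∀ x, F x (E.bracket u u' x - E.bracket v v' x)
        = -(E.bracket u v' x + E.bracket v u' x)) ∧
    (∀ x, F x (E.bracket u v' x + E.bracket v u' x)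
        = E.bracket u u' x - E.bracket v v' x)

/-- A generalized (admissible) metric on a Courant algebroid, described by the associated
orthogonal, `⟨·,·⟩`-symmetric involution `G^end` of `E`; its `−1`-eigenbundle `E₋`
(the subbundle defining the generalized metric) is required to have nondegenerate
scalar product and anchor restricting to an isomorphism `E₋ → TM`. -/
structure GenMetric (E : CourantAlgebroid m M) where
  Gend : ∀ x, E.Fib x →ₗ[ℝ] E.Fib x
  smooth : ∀ {u}, u ∈ E.secs → (fun x => Gend x (u x)) ∈ E.secs
  symm : ∀ x u v, E.g x (Gend x u) v = E.g x u (Gend x v)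
  invol : ∀ x v, Gend x (Gend x v) = v
  nondeg_minus : ∀ x (v : E.Fib x), Gend x v = -v →
    (∀ w, Gend x w = -w → E.g x v w = 0) → v = 0
  anchor_bij : ∀ x, Function.Bijective
    (fun v : {w : E.Fib x // Gend x w = -w} => E.anchor x v.1)

/-- `DG = 0`, i.e. `π(w) G(u,v) = G(D_w u, v) + G(u, D_w v)` where
`G(u,v) = ⟨G^end u, v⟩`. -/
def GenConnection.PreservesMetric {E : CourantAlgebroid m M}
    (D : GenConnection E) (G : GenMetric E) : Prop :=
  ∀ {u v w}, u ∈ E.secs → v ∈ E.secs → w ∈ E.secs → ∀ x,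
    mdirDeriv (fun y => E.g y (G.Gend y (u y)) (v y)) x (E.anchor x (w x))
      = E.g x (G.Gend x (D.D w u x)) (v x) + E.g x (G.Gend x (u x)) (D.D w v x)

/-- A `Bₙ`-generalized almost complex structure on an odd exact Courant algebroid `E`
over an `n`-dimensional manifold: a `⟨·,·⟩`-skew-symmetric endomorphism `𝓕` of rank `2n`
satisfying `𝓕² = −Id + (−1)ⁿ ⟨·,u₀⟩ u₀` for a section `u₀` with `⟨u₀,u₀⟩ = (−1)ⁿ`. -/
structure BnGACS {n : ℕ} {M' : Type*} [TopologicalSpace M']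
    [ChartedSpace (EuclideanSpace ℝ (Fin n)) M']
    [IsManifold (𝓡 n) (⊤ : ℕ∞) M']
    (E : OddExactCourantAlgebroid n M') where
  F : ∀ x, E.Fib x →ₗ[ℝ] E.Fib x
  smooth : ∀ {u}, u ∈ E.secs → (fun x => F x (u x)) ∈ E.secs
  skew : ∀ x u v, E.g x (F x u) v = - E.g x u (F x v)
  u₀ : ∀ x, E.Fib x
  u₀_mem : u₀ ∈ E.secs
  u₀_norm : ∀ x, E.g x (u₀ x) (u₀ x) = (-1 : ℝ) ^ n
  F_sq : ∀ x v, F x (F x v) = -v + ((-1 : ℝ) ^ n * E.g x v (u₀ x)) • u₀ x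
  rank_F : ∀ x, Module.finrank ℝ (LinearMap.range (F x)) = 2 * n

namespace BnGACS

variable {n : ℕ} {M' : Type*} [TopologicalSpace M']
  [ChartedSpace (EuclideanSpace ℝ (Fin n)) M']
  [IsManifold (𝓡 n) (⊤ : ℕ∞) M']
  {E : OddExactCourantAlgebroid n M'}

/-- `𝓕` applied to a section. -/
def ap (J : BnGACS E) (u : ∀ x, E.Fib x) : ∀ x, E.Fib x := fun x => J.F x (u x)

/-- Integrability of a `Bₙ`-generalized almost complex structure: the sections of its
i-eigenbundle `L ⊂ E^ℂ` are closed under the Dorfman bracket. -/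
def Integrable (J : BnGACS E) : Prop :=
  CourantAlgebroid.IntegrableF E.toCourantAlgebroid J.F

/-- `u ∈ Γ(U^⊥)`, where `U = Ker 𝓕` is spanned by `u₀`. -/
def Perp (J : BnGACS E) (u : ∀ x, E.Fib x) : Prop :=
  ∀ x, E.g x (u x) (J.u₀ x) = 0

/-- The Nijenhuis tensor `N_𝓕(u,v) = [𝓕u,𝓕v] − [u,v] − 𝓕([𝓕u,v] + [u,𝓕v])`. -/
def Nij (J : BnGACS E) (u v : ∀ x, E.Fib x) : ∀ x, E.Fib x :=
  fun x => E.bracket (J.ap u) (J.ap v) x - E.bracket u v x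
    - J.F x (E.bracket (J.ap u) v x + E.bracket u (J.ap v) x)

/-- The Dorfman-Lie derivative `(𝐋_{u₀} 𝓕) u = [u₀, 𝓕u] − 𝓕 [u₀, u]`. -/
def lieF (J : BnGACS E) (u : ∀ x, E.Fib x) : ∀ x, E.Fib x :=
  fun x => E.bracket J.u₀ (J.ap u) x - J.F x (E.bracket J.u₀ u x)

/-- The covariant derivative `(D_u 𝓕) v = D_u (𝓕 v) − 𝓕 (D_u v)`. -/
def covF (J : BnGACS E) (D : GenConnection E.toCourantAlgebroid)
    (u v : ∀ x, E.Fib x) : ∀ x, E.Fib x :=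
  fun x => D.D u (J.ap v) x - J.F x (D.D u v x)

end BnGACS

/-- A generalized (almost) complex structure on a Courant algebroid of even rank:
a `⟨·,·⟩`-skew-symmetric endomorphism `𝓙` with `𝓙² = −Id`, whose i-eigenbundle has
sections closed under the Dorfman bracket. -/
structure GenComplex (E : CourantAlgebroid m M) where
  J : ∀ x, E.Fib x →ₗ[ℝ] E.Fib x
  smooth : ∀ {u}, u ∈ E.secs → (fun x => J x (u x)) ∈ E.secs
  skew : ∀ x u v, E.g x (J x u) v = - E.g x u (J x v)
  sq : ∀ x v, J x (J x v) = -v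
  integrable : CourantAlgebroid.IntegrableF E J

end

variable {n : ℕ} {M : Type*} [TopologicalSpace M]
  [ChartedSpace (EuclideanSpace ℝ (Fin n)) M]
  [IsManifold (𝓡 n) (⊤ : ℕ∞) M]

section Aux

variable {E : OddExactCourantAlgebroid n M}

lemma aux_bneg_left (E : OddExactCourantAlgebroid n M) {u v : ∀ x, E.Fib x}
    (hu : u ∈ E.secs) (hv : v ∈ E.secs) :
    E.bracket (fun y => -(u y)) v = fun y => -(E.bracket u v y) := by
  have h : (fun y => -(u y)) = fun y => (-1 : ℝ) • u y := by funext y; simp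
  rw [h, E.bracket_smul_left (-1) hu hv]
  funext y; simp

lemma aux_bneg_right (E : OddExactCourantAlgebroid n M) {u v : ∀ x, E.Fib x}
    (hu : u ∈ E.secs) (hv : v ∈ E.secs) :
    E.bracket u (fun y => -(v y)) = fun y => -(E.bracket u v y) := by
  have h : (fun y => -(v y)) = fun y => (-1 : ℝ) • v y := by funext y; simp
  rw [h, E.bracket_smul_right (-1) hu hv]
  funext y; simp

lemma aux_F_u₀ (J : BnGACS E) (x : M) : J.F x (J.u₀ x) = 0 := by
  have hpow : ((-1 : ℝ) ^ n) * ((-1 : ℝ) ^ n) = 1 := by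
    rw [← pow_add]; exact Even.neg_one_pow ⟨n, rfl⟩
  have hsq : J.F x (J.F x (J.u₀ x)) = 0 := by
    rw [J.F_sq, J.u₀_norm, hpow, one_smul]
    abel
  have hg : E.g x (J.F x (J.u₀ x)) (J.u₀ x) = 0 := by
    have h1 := J.skew x (J.u₀ x) (J.u₀ x)
    have h2 := E.g_symm x (J.u₀ x) (J.F x (J.u₀ x))
    have h3 := E.g_symm x (J.F x (J.u₀ x)) (J.u₀ x)
    linarith [h1, h2, h3]
  have h := J.F_sq x (J.F x (J.u₀ x))
  rw [hsq, map_zero, hg, mul_zero, zero_smul, add_zero] at h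
  exact neg_eq_zero.mp h.symm

end Aux

/-- Let `E` be an odd exact Courant algebroid over an `n`-dimensional
manifold `M`, `𝓕` a `Bₙ`-generalized almost complex structure on `E` and `U = Ker 𝓕`.
Then `𝓕` is integrable if and only if its Nijenhuis tensor
`N_𝓕(u,v) = [𝓕u,𝓕v] − [u,v] − 𝓕([𝓕u,v] + [u,𝓕v])` vanishes identically on
`Γ(U^⊥) × Γ(U^⊥)`. -/
theorem bnGACS_integrable_iff_nijenhuis_vanishes
    (E : OddExactCourantAlgebroid n M) (J : BnGACS E) :
    J.Integrable ↔
      ∀ u v, u ∈ E.secs → v ∈ E.secs → J.Perp u → J.Perp v →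
        ∀ x, J.Nij u v x = 0 := by
  constructor
  · -- integrable → Nijenhuis vanishes
    intro hInt u v hu hv hpu hpv x
    have hv₁s : (fun y => -(J.F y (u y))) ∈ E.secs := E.secs_neg (J.smooth hu)
    have hv₂s : (fun y => -(J.F y (v y))) ∈ E.secs := E.secs_neg (J.smooth hv)
    have h1 : ∀ y, J.F y (u y) = -(-(J.F y (u y))) := fun y => by simp
    have h2 : ∀ y, J.F y (-(J.F y (u y))) = u y := by
      intro y
      rw [map_neg, J.F_sq, hpu y, mul_zero, zero_smul, add_zero, neg_neg]
    have h3 : ∀ y, J.F y (v y) = -(-(J.F y (v y))) := fun y => by simp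
    have h4 : ∀ y, J.F y (-(J.F y (v y))) = v y := by
      intro y
      rw [map_neg, J.F_sq, hpv y, mul_zero, zero_smul, add_zero, neg_neg]
    have hmain := (hInt hu hv₁s hv hv₂s h1 h2 h3 h4).2 x
    have e1 : E.bracket u (fun y => -(J.F y (v y))) x
        = -(E.bracket u (J.ap v) x) := congrFun (aux_bneg_right E hu (J.smooth hv)) x
    have e2 : E.bracket (fun y => -(J.F y (u y))) v x
        = -(E.bracket (J.ap u) v x) := congrFun (aux_bneg_left E (J.smooth hu) hv) x
    have e3 : E.bracket (fun y => -(J.F y (u y))) (fun y => -(J.F y (v y))) x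
        = E.bracket (J.ap u) (J.ap v) x := by
      rw [congrFun (aux_bneg_left E (J.smooth hu) hv₂s) x,
        congrFun (aux_bneg_right E (J.smooth hu) (J.smooth hv)) x, neg_neg]
      rfl
    rw [e1, e2, e3] at hmain
    have hsum : (-(E.bracket u (J.ap v) x)) + (-(E.bracket (J.ap u) v x))
        = -(E.bracket (J.ap u) v x + E.bracket u (J.ap v) x) := by abel
    rw [hsum, map_neg] at hmain
    have hF : J.F x (E.bracket (J.ap u) v x + E.bracket u (J.ap v) x)
        = E.bracket (J.ap u) (J.ap v) x - E.bracket u v x := by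
      have := neg_eq_iff_eq_neg.mp hmain
      rw [this]; abel
    simp only [BnGACS.Nij]
    rw [hF]; abel
  · -- Nijenhuis vanishes → integrable
    intro hN
    intro u v u' v' hu hv hu' hv' hFu hFv hFu' hFv'
    have hFg : ∀ (a : ∀ x, E.Fib x) (x : M),
        E.g x (J.F x (a x)) (J.u₀ x) = 0 := by
      intro a x
      rw [J.skew, aux_F_u₀ J x, map_zero, neg_zero]
    have hpu : J.Perp u := fun x => by rw [← hFv x]; exact hFg v x
    have hpu' : J.Perp u' := fun x => by rw [← hFv' x]; exact hFg v' x
    have hvx : ∀ x, v x = -(J.F x (u x)) := fun x => by rw [hFu x, neg_neg]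
    have hv'x : ∀ x, v' x = -(J.F x (u' x)) := fun x => by rw [hFu' x, neg_neg]
    have hpv' : J.Perp v' := fun x => by
      rw [hv'x x, map_neg, LinearMap.neg_apply, hFg u' x, neg_zero]
    have haap : J.ap u = fun y => -(v y) := funext hFu
    have haap' : J.ap u' = fun y => -(v' y) := funext hFu'
    have haapv' : J.ap v' = u' := funext hFv'
    constructor
    · -- F([u,u'] - [v,v']) = -([u,v'] + [v,u'])
      intro x
      have hNx := hN u v' hu hv' hpu hpv' x
      simp only [BnGACS.Nij] at hNx
      rw [haap, haapv'] at hNx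
      rw [congrFun (aux_bneg_left E hv hu') x,
        congrFun (aux_bneg_left E hv hv') x] at hNx
      -- hNx : -[v,u']x - [u,v']x - F x (-[v,v']x + [u,u']x) = 0
      have harg : (-(E.bracket v v' x)) + E.bracket u u' x
          = E.bracket u u' x - E.bracket v v' x := by abel
      rw [harg] at hNx
      have := sub_eq_zero.mp hNx
      rw [← this]; abel
    · -- F([u,v'] + [v,u']) = [u,u'] - [v,v']
      intro x
      have hNx := hN u u' hu hu' hpu hpu' x
      simp only [BnGACS.Nij] at hNx
      rw [haap, haap'] at hNx
      rw [congrFun (aux_bneg_left E hv (E.secs_neg hv')) x,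
        congrFun (aux_bneg_right E hv hv') x, neg_neg] at hNx
      rw [congrFun (aux_bneg_left E hv hu') x,
        congrFun (aux_bneg_right E hu hv') x] at hNx
      -- hNx : [v,v']x - [u,u']x - F x (-[v,u']x + -[u,v']x) = 0
      have harg : (-(E.bracket v u' x)) + (-(E.bracket u v' x))
          = -(E.bracket u v' x + E.bracket v u' x) := by abel
      rw [harg, map_neg, sub_neg_eq_add] at hNx
      have hF := eq_neg_of_add_eq_zero_right hNx
      rw [hF]; abel
end

section
/- In the setting of the previous construction (E odd exact Courant algebroid, 𝓕 a B_n-generalized almost complex structure with Ker 𝓕 spanned by u₀, D torsion-free with Du₀=0, and D̃ defined by ⟨D̃_u v,w⟩ = ⟨D_u v,w⟩ − (1/4)⟨{A_u,𝓕}v,w⟩ − (1/2)⟨𝓕(D_u𝓕)v,w⟩), the torsion of D̃ satisfies: T^{D̃}(u,v,w) = (1/4)⟨N_𝓕(u,v),w⟩ for all u,v,w ∈ Γ(U^⊥), and T^{D̃}(u,v,u₀) = (1/2)⟨(𝐋_{u₀}𝓕)u, 𝓕v⟩ for all u,v ∈ Γ(E). -/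
/-! Common framework: Courant algebroids over a smooth manifold, described through
their fibers, their (smooth) sections, scalar product, anchor and Dorfman bracket;
generalized connections, torsion, generalized metrics, `Bₙ`-generalized almost
complex structures on odd exact Courant algebroids, and generalized complex
structures on Courant algebroids of even rank. -/

open Manifold

variable {n : ℕ} {M : Type*} [TopologicalSpace M]
  [ChartedSpace (EuclideanSpace ℝ (Fin n)) M]
  [IsManifold (𝓡 n) (⊤ : ℕ∞) M]


section AuxLemmas

variable {E : OddExactCourantAlgebroid n M} {J : BnGACS E}
  {D : GenConnection E.toCourantAlgebroid}

lemma aux_neg_one_pow_sq : ((-1 : ℝ) ^ n) * ((-1 : ℝ) ^ n) = 1 := by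
  rw [← mul_pow]; norm_num

lemma aux_ap_eq (b : ∀ x, E.Fib x) : J.ap b = fun z => J.F z (b z) := rfl

lemma aux_Fu0 (x : M) : J.F x (J.u₀ x) = 0 := by
  have h0 : E.g x (J.F x (J.u₀ x)) (J.u₀ x) = 0 := by
    have h1 := J.skew x (J.u₀ x) (J.u₀ x)
    have h2 := E.g_symm x (J.F x (J.u₀ x)) (J.u₀ x)
    linarith
  have h1 : J.F x (J.F x (J.u₀ x)) = 0 := by
    rw [J.F_sq, J.u₀_norm, aux_neg_one_pow_sq, one_smul, neg_add_cancel]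
  have h2 := J.F_sq x (J.F x (J.u₀ x))
  rw [h1, h0, mul_zero, zero_smul, add_zero, map_zero] at h2
  exact neg_eq_zero.mp h2.symm

lemma aux_ap_perp (u : ∀ x, E.Fib x) : J.Perp (J.ap u) := by
  intro x
  show E.g x (J.F x (u x)) (J.u₀ x) = 0
  rw [J.skew, aux_Fu0]
  simp

lemma aux_covF_u0 (hDu₀ : D.PreservesSec J.u₀) {a : ∀ x, E.Fib x}
    (ha : a ∈ E.secs) (x : M) : J.covF D a J.u₀ x = 0 := by
  have h1 : J.ap J.u₀ = fun y => (0:ℝ) • J.u₀ y := by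
    funext y
    show J.F y (J.u₀ y) = (0:ℝ) • J.u₀ y
    rw [aux_Fu0, zero_smul]
  show D.D a (J.ap J.u₀) x - J.F x (D.D a J.u₀ x) = 0
  rw [h1, D.smul_sec 0 ha J.u₀_mem, hDu₀ ha x, map_zero, sub_zero]
  simp

lemma aux_split (a b : ∀ x, E.Fib x) (x : M) (c : E.Fib x) :
    E.g x (D.D a (J.ap b) x) c
      = E.g x (J.covF D a b x) c - E.g x (D.D a b x) (J.F x c) := by
  have h : D.D a (J.ap b) x = J.covF D a b x + J.F x (D.D a b x) := by
    simp only [BnGACS.covF]; abel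
  rw [h, map_add, LinearMap.add_apply, J.skew x (D.D a b x) c]
  ring

lemma aux_gFF (x : M) (z y : E.Fib x) :
    E.g x (J.F x z) (J.F x y)
      = E.g x z y - ((-1:ℝ)^n * E.g x y (J.u₀ x)) * E.g x z (J.u₀ x) := by
  rw [J.skew, J.F_sq]
  simp only [map_add, map_neg, map_smul, smul_eq_mul]
  ring

lemma aux_bracket (hTF : D.TorsionFree) {a b c : ∀ x, E.Fib x}
    (ha : a ∈ E.secs) (hb : b ∈ E.secs) (hc : c ∈ E.secs) (x : M) :
    E.g x (E.bracket a b x) (c x)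
      = E.g x (D.D a b x) (c x) - E.g x (D.D b a x) (c x)
        + E.g x (D.D c a x) (b x) := by
  have h := hTF ha hb hc x
  simp only [GenConnection.torsion, map_sub, LinearMap.sub_apply] at h
  linarith

lemma aux_covF_skew {a b c : ∀ x, E.Fib x}
    (ha : a ∈ E.secs) (hb : b ∈ E.secs) (hc : c ∈ E.secs) (x : M) :
    E.g x (J.covF D a b x) (c x) = - E.g x (J.covF D a c x) (b x) := by
  have hm1 := D.metric (J.smooth hb) hc ha x
  have hfun : (fun y => E.g y (J.F y (b y)) (c y))
      = (fun y => E.g y (b y) (-(J.F y (c y)))) := by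
    funext y
    rw [J.skew, map_neg]
  have hnegsec : (fun z => -(J.F z (c z))) ∈ E.secs := E.secs_neg (J.smooth hc)
  have hm2 := D.metric hb hnegsec ha x
  rw [hfun] at hm1
  have key := hm1.symm.trans hm2
  have hD : D.D a (fun z => -(J.F z (c z))) x
      = (-1:ℝ) • D.D a (fun z => J.F z (c z)) x := by
    have he : (fun z => -(J.F z (c z))) = (fun z => (-1:ℝ) • J.F z (c z)) := by
      funext z
      rw [neg_one_smul]
    rw [he]
    exact congrFun (D.smul_sec (-1) ha (J.smooth hc)) x
  rw [hD] at key
  simp only [map_neg, map_smul, smul_eq_mul, neg_one_mul] at key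
  have e1 : E.g x (J.covF D a b x) (c x)
      = E.g x (D.D a (fun z => J.F z (b z)) x) (c x)
        - E.g x (J.F x (D.D a b x)) (c x) := by
    simp only [BnGACS.covF, aux_ap_eq, map_sub, LinearMap.sub_apply]
  have e2 : E.g x (J.covF D a c x) (b x)
      = E.g x (D.D a (fun z => J.F z (c z)) x) (b x)
        - E.g x (J.F x (D.D a c x)) (b x) := by
    simp only [BnGACS.covF, aux_ap_eq, map_sub, LinearMap.sub_apply]
  have t1 : E.g x (J.F x (b x)) (D.D a c x)
      = - E.g x (b x) (J.F x (D.D a c x)) := J.skew x (b x) (D.D a c x)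
  have t2 : E.g x (J.F x (D.D a b x)) (c x)
      = - E.g x (D.D a b x) (J.F x (c x)) := J.skew x (D.D a b x) (c x)
  have t3 : E.g x (b x) (D.D a (fun z => J.F z (c z)) x)
      = E.g x (D.D a (fun z => J.F z (c z)) x) (b x) := E.g_symm x _ _
  have t4 : E.g x (b x) (J.F x (D.D a c x))
      = E.g x (J.F x (D.D a c x)) (b x) := E.g_symm x _ _
  linarith

lemma aux_covF_apF (hDu₀ : D.PreservesSec J.u₀) {a b : ∀ x, E.Fib x}
    (ha : a ∈ E.secs) (hb : b ∈ E.secs) (x : M) :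
    J.covF D a (J.ap b) x = -(J.F x (J.covF D a b x)) := by
  have hfsm : ContMDiff (𝓡 n) 𝓘(ℝ, ℝ) (⊤ : ℕ∞) (fun y => E.g y (b y) (J.u₀ y)) :=
    E.g_smooth hb J.u₀_mem
  have hfu : (fun y => E.g y (b y) (J.u₀ y) • J.u₀ y) ∈ E.secs :=
    E.secs_smul hfsm J.u₀_mem
  have hm1 : (fun z => (-1:ℝ) • b z) ∈ E.secs := E.secs_smul contMDiff_const hb
  have hm2 : (fun z => ((-1:ℝ)^n) • (E.g z (b z) (J.u₀ z) • J.u₀ z)) ∈ E.secs :=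
    E.secs_smul contMDiff_const hfu
  have happ : J.ap (J.ap b)
      = fun y => (-1:ℝ) • b y + ((-1:ℝ)^n) • (E.g y (b y) (J.u₀ y) • J.u₀ y) := by
    funext y
    show J.F y (J.F y (b y)) = _
    rw [J.F_sq]
    module
  have h1 : D.D a (J.ap (J.ap b)) x
      = D.D a (fun z => (-1:ℝ) • b z) x
        + D.D a (fun z => ((-1:ℝ)^n) • (E.g z (b z) (J.u₀ z) • J.u₀ z)) x := by
    rw [happ]
    exact congrFun (D.add_sec ha hm1 hm2) x
  have h2 : D.D a (fun z => (-1:ℝ) • b z) x = (-1:ℝ) • D.D a b x :=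
    congrFun (D.smul_sec (-1) ha hb) x
  have h3 : D.D a (fun z => ((-1:ℝ)^n) • (E.g z (b z) (J.u₀ z) • J.u₀ z)) x
      = ((-1:ℝ)^n) • D.D a (fun z => E.g z (b z) (J.u₀ z) • J.u₀ z) x :=
    congrFun (D.smul_sec _ ha hfu) x
  have h4 : D.D a (fun z => E.g z (b z) (J.u₀ z) • J.u₀ z) x
      = mdirDeriv (fun y => E.g y (b y) (J.u₀ y)) x (E.anchor x (a x)) • J.u₀ x
        + E.g x (b x) (J.u₀ x) • D.D a J.u₀ x :=
    congrFun (D.leibniz hfsm ha J.u₀_mem) x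
  have h5 : mdirDeriv (fun y => E.g y (b y) (J.u₀ y)) x (E.anchor x (a x))
      = E.g x (D.D a b x) (J.u₀ x) := by
    have h := D.metric hb J.u₀_mem ha x
    rw [hDu₀ ha x, map_zero, add_zero] at h
    exact h
  have h6 : D.D a (J.ap b) x = J.covF D a b x + J.F x (D.D a b x) := by
    simp only [BnGACS.covF]; abel
  show D.D a (J.ap (J.ap b)) x - J.F x (D.D a (J.ap b) x)
      = -(J.F x (J.covF D a b x))
  rw [h1, h2, h3, h4, h5, hDu₀ ha x, h6, map_add, J.F_sq x (D.D a b x),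
    smul_zero, add_zero]
  module

lemma aux_covF_apF_scalar (hDu₀ : D.PreservesSec J.u₀) {a b : ∀ x, E.Fib x}
    (ha : a ∈ E.secs) (hb : b ∈ E.secs) (x : M) (c : E.Fib x) :
    E.g x (J.covF D a (J.ap b) x) c = E.g x (J.covF D a b x) (J.F x c) := by
  rw [aux_covF_apF hDu₀ ha hb x, map_neg, LinearMap.neg_apply, J.skew]
  ring

end AuxLemmas

/-- In the setting of the construction of `D̃` (with `E` odd exact,
`𝓕` a `Bₙ`-generalized almost complex structure with `Ker 𝓕` spanned by `u₀`, `D`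
torsion-free with `Du₀ = 0`, `A_u` as before, and `D̃` defined by
`⟨D̃_u v, w⟩ = ⟨D_u v, w⟩ − ¼⟨{A_u,𝓕}v, w⟩ − ½⟨𝓕(D_u𝓕)v, w⟩`), the torsion of `D̃`
satisfies `T^{D̃}(u,v,w) = ¼⟨N_𝓕(u,v),w⟩` on `Γ(U^⊥)` and
`T^{D̃}(u,v,u₀) = ½⟨(𝐋_{u₀}𝓕)u, 𝓕v⟩` for all `u,v ∈ Γ(E)`. -/
theorem torsion_of_tilde_genConnection
    (E : OddExactCourantAlgebroid n M) (J : BnGACS E)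
    (D : GenConnection E.toCourantAlgebroid)
    (hTF : D.TorsionFree) (hDu₀ : D.PreservesSec J.u₀)
    (A : (∀ x, E.Fib x) → (∀ x, E.Fib x) → (∀ x, E.Fib x))
    (hAsecs : ∀ u v, u ∈ E.secs → v ∈ E.secs → A u v ∈ E.secs)
    (hAsymm : ∀ u v w, u ∈ E.secs → v ∈ E.secs → w ∈ E.secs → ∀ x,
      E.g x (A u v x) (w x) = E.g x (A u w x) (v x))
    (hAtriv : ∀ u, u ∈ E.secs → ∀ x, A u J.u₀ x = 0)
    (hAdef : ∀ u v w, u ∈ E.secs → v ∈ E.secs → w ∈ E.secs →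
      J.Perp v → J.Perp w → ∀ x,
      E.g x (A u v x) (w x)
        = (1 / 2) * (E.g x (J.covF D v u x) (w x) + E.g x (J.covF D w u x) (v x)))
    (Dt : GenConnection E.toCourantAlgebroid)
    (hDt : ∀ u v w, u ∈ E.secs → v ∈ E.secs → w ∈ E.secs → ∀ x,
      E.g x (Dt.D u v x) (w x)
        = E.g x (D.D u v x) (w x)
          - (1 / 4) * E.g x (A u (J.ap v) x + J.F x (A u v x)) (w x)
          - (1 / 2) * E.g x (J.F x (J.covF D u v x)) (w x)) :
    (∀ u v w, u ∈ E.secs → v ∈ E.secs → w ∈ E.secs →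
      J.Perp u → J.Perp v → J.Perp w → ∀ x,
      Dt.torsion u v w x = (1 / 4) * E.g x (J.Nij u v x) (w x)) ∧
    (∀ u v, u ∈ E.secs → v ∈ E.secs → ∀ x,
      Dt.torsion u v J.u₀ x = (1 / 2) * E.g x (J.lieF u x) (J.F x (v x))) := by
  have hA0 : ∀ s t, s ∈ E.secs → t ∈ E.secs → J.Perp s → ∀ x,
      E.g x (A J.u₀ s x) (t x) = 0 := by
    intro s t hs ht ps x
    have hfsm : ContMDiff (𝓡 n) 𝓘(ℝ, ℝ) (⊤ : ℕ∞)
        (fun y => ((-1:ℝ)^n * E.g y (t y) (J.u₀ y))) :=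
      contMDiff_const.mul (E.g_smooth ht J.u₀_mem)
    have ht' : (fun y => t y + -(((-1:ℝ)^n * E.g y (t y) (J.u₀ y)) • J.u₀ y))
        ∈ E.secs :=
      E.secs_add ht (E.secs_neg (E.secs_smul hfsm J.u₀_mem))
    have pt' : J.Perp
        (fun y => t y + -(((-1:ℝ)^n * E.g y (t y) (J.u₀ y)) • J.u₀ y)) := by
      intro y
      have h1 := J.u₀_norm y
      have h2 : ((-1:ℝ)^n * E.g y (t y) (J.u₀ y)) * ((-1:ℝ)^n)
          = E.g y (t y) (J.u₀ y) := by
        rw [mul_comm, ← mul_assoc, aux_neg_one_pow_sq, one_mul]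
      show E.g y (t y + -(((-1:ℝ)^n * E.g y (t y) (J.u₀ y)) • J.u₀ y)) (J.u₀ y) = 0
      rw [map_add, LinearMap.add_apply, map_neg, LinearMap.neg_apply, map_smul,
        LinearMap.smul_apply, smul_eq_mul, h1]
      linarith
    have hdec : E.g x (A J.u₀ s x) (t x)
        = E.g x (A J.u₀ s x)
            (t x + -(((-1:ℝ)^n * E.g x (t x) (J.u₀ x)) • J.u₀ x))
          + ((-1:ℝ)^n * E.g x (t x) (J.u₀ x)) * E.g x (A J.u₀ s x) (J.u₀ x) := by
      rw [map_add, map_neg, map_smul, smul_eq_mul]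
      ring
    have h2 : E.g x (A J.u₀ s x) (J.u₀ x) = 0 := by
      rw [hAsymm J.u₀ s J.u₀ J.u₀_mem hs J.u₀_mem x, hAtriv J.u₀ J.u₀_mem x]
      simp
    have h3 := hAdef J.u₀ s
      (fun y => t y + -(((-1:ℝ)^n * E.g y (t y) (J.u₀ y)) • J.u₀ y))
      J.u₀_mem hs ht' ps pt' x
    rw [aux_covF_u0 hDu₀ hs x, aux_covF_u0 hDu₀ ht' x] at h3
    simp only [map_zero, LinearMap.zero_apply, add_zero, mul_zero, zero_add] at h3
    rw [hdec, h2, h3]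
    ring
  constructor
  · intro u v w hu hv hw pu pv pw x
    have hFu := J.smooth hu
    have hFv := J.smooth hv
    have hFw := J.smooth hw
    have hdt1 := hDt u v w hu hv hw x
    have hdt2 := hDt v u w hv hu hw x
    have hdt3 := hDt w u v hw hu hv x
    have h1 := hAdef u (J.ap v) w hu hFv hw (aux_ap_perp v) pw x
    have h2 := hAdef u v (J.ap w) hu hv hFw pv (aux_ap_perp w) x
    have h3 := hAdef v (J.ap u) w hv hFu hw (aux_ap_perp u) pw x
    have h4 := hAdef v u (J.ap w) hv hu hFw pu (aux_ap_perp w) x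
    have h5 := hAdef w (J.ap u) v hw hFu hv (aux_ap_perp u) pv x
    have h6 := hAdef w u (J.ap v) hw hu hFv pu (aux_ap_perp v) x
    have k1 := J.skew x (A u v x) (w x)
    have k2 := J.skew x (A v u x) (w x)
    have k3 := J.skew x (A w u x) (v x)
    have k4 := J.skew x (J.covF D u v x) (w x)
    have k5 := J.skew x (J.covF D v u x) (w x)
    have k6 := J.skew x (J.covF D w u x) (v x)
    have k7a := J.skew x (E.bracket (J.ap u) v x) (w x)
    have k7b := J.skew x (E.bracket u (J.ap v) x) (w x)
    have b1 := aux_bracket hTF hu hv hw x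
    have b2 := aux_bracket hTF hFu hFv hw x
    have b3 := aux_bracket hTF hFu hv hFw x
    have b4 := aux_bracket hTF hu hFv hFw x
    have sp1 := aux_split (J := J) (D := D) (J.ap u) v x (w x)
    have sp2 := aux_split (J := J) (D := D) (J.ap v) u x (w x)
    have sp3 := aux_split (J := J) (D := D) w u x (J.F x (v x))
    have sp4 := aux_split (J := J) (D := D) v u x (J.F x (w x))
    have sp5 := aux_split (J := J) (D := D) (J.ap w) u x (v x)
    have sp6 := aux_split (J := J) (D := D) u v x (J.F x (w x))
    have hFFv : J.F x (J.F x (v x)) = -(v x) := by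
      rw [J.F_sq, pv x, mul_zero, zero_smul, add_zero]
    have hFFw : J.F x (J.F x (w x)) = -(w x) := by
      rw [J.F_sq, pw x, mul_zero, zero_smul, add_zero]
    rw [hFFv, map_neg] at sp3
    rw [hFFw, map_neg] at sp4
    rw [hFFw, map_neg] at sp6
    have i1 := aux_covF_apF_scalar (J := J) (D := D) hDu₀ hw hv x (u x)
    have i2 := aux_covF_skew (J := J) (D := D) hw hFv hu x
    have i3 := aux_covF_skew (J := J) (D := D) hFw hv hu x
    have i4 := aux_covF_skew (J := J) (D := D) hFu hw hv x
    have i5 := aux_covF_apF_scalar (J := J) (D := D) hDu₀ hv hw x (u x)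
    have i6 := aux_covF_skew (J := J) (D := D) hv hFw hu x
    have i7 := aux_covF_apF_scalar (J := J) (D := D) hDu₀ hu hw x (v x)
    have i8 := aux_covF_skew (J := J) (D := D) hu hFw hv x
    have i9 := aux_covF_skew (J := J) (D := D) hFv hw hu x
    simp only [GenConnection.torsion, BnGACS.Nij, aux_ap_eq, map_sub, map_add,
      LinearMap.sub_apply, LinearMap.add_apply] at *
    linarith
  · intro u v hu hv x
    have hFu := J.smooth hu
    have hFv := J.smooth hv
    have hdt1 := hDt u v J.u₀ hu hv J.u₀_mem x
    have hdt2 := hDt v u J.u₀ hv hu J.u₀_mem x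
    have hdt3 := hDt J.u₀ u v J.u₀_mem hu hv x
    have z1 : E.g x (A u (J.ap v) x) (J.u₀ x) = 0 := by
      rw [hAsymm u (J.ap v) J.u₀ hu hFv J.u₀_mem x, hAtriv u hu x]
      simp
    have z1' : E.g x (A v (J.ap u) x) (J.u₀ x) = 0 := by
      rw [hAsymm v (J.ap u) J.u₀ hv hFu J.u₀_mem x, hAtriv v hv x]
      simp
    have z2 : E.g x (J.F x (A u v x)) (J.u₀ x) = 0 := by
      rw [J.skew, aux_Fu0]; simp
    have z2' : E.g x (J.F x (A v u x)) (J.u₀ x) = 0 := by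
      rw [J.skew, aux_Fu0]; simp
    have z3 : E.g x (J.F x (J.covF D u v x)) (J.u₀ x) = 0 := by
      rw [J.skew, aux_Fu0]; simp
    have z3' : E.g x (J.F x (J.covF D v u x)) (J.u₀ x) = 0 := by
      rw [J.skew, aux_Fu0]; simp
    have z4 : E.g x (A J.u₀ (J.ap u) x) (v x) = 0 :=
      hA0 (J.ap u) v hFu hv (aux_ap_perp u) x
    have z5a := J.skew x (A J.u₀ u x) (v x)
    have z5b := hAsymm J.u₀ u (J.ap v) J.u₀_mem hu hFv x
    have z5c : E.g x (A J.u₀ (J.ap v) x) (u x) = 0 :=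
      hA0 (J.ap v) u hFv hu (aux_ap_perp v) x
    have khalf := J.skew x (J.covF D J.u₀ u x) (v x)
    have b1 := aux_bracket hTF hu hv J.u₀_mem x
    have b2 := aux_bracket hTF J.u₀_mem hFu hFv x
    rw [hDu₀ hFu x, hDu₀ hFv x] at b2
    simp only [map_zero, LinearMap.zero_apply, sub_zero, add_zero] at b2
    have b3 := aux_bracket hTF J.u₀_mem hu hv x
    rw [hDu₀ hu x, hDu₀ hv x] at b3
    simp only [map_zero, LinearMap.zero_apply, sub_zero, add_zero] at b3
    have b4 := aux_bracket hTF J.u₀_mem hu J.u₀_mem x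
    rw [hDu₀ hu x, hDu₀ J.u₀_mem x] at b4
    simp only [map_zero, LinearMap.zero_apply, sub_zero, add_zero] at b4
    have sp := aux_split (J := J) (D := D) J.u₀ u x (J.F x (v x))
    have hFFv := J.F_sq x (v x)
    have gf1 : E.g x (D.D J.u₀ u x) (J.F x (J.F x (v x)))
        = - E.g x (D.D J.u₀ u x) (v x)
          + ((-1:ℝ)^n * E.g x (v x) (J.u₀ x)) * E.g x (D.D J.u₀ u x) (J.u₀ x) := by
      rw [hFFv, map_add, map_neg, map_smul, smul_eq_mul]
    have gf2 := aux_gFF (J := J) x (E.bracket J.u₀ u x) (v x)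
    have b4c : ((-1:ℝ)^n * E.g x (v x) (J.u₀ x))
          * E.g x (E.bracket J.u₀ u x) (J.u₀ x)
        = ((-1:ℝ)^n * E.g x (v x) (J.u₀ x))
          * E.g x (D.D J.u₀ u x) (J.u₀ x) := by
      rw [b4]
    simp only [GenConnection.torsion, BnGACS.lieF, aux_ap_eq, map_sub, map_add,
      LinearMap.sub_apply, LinearMap.add_apply] at *
    linarith
end

section
/- Let 𝓕 be a B_n-generalized complex structure on an odd exact Courant algebroid E over an n-dimensional manifold M, with i-eigenbundle L ⊂ E^ℂ. Then any two B_n-complex generalized connections D, D̃ (i.e. torsion-free generalized connections preserving 𝓕) are related by D̃ = D + Re(sk η) for some η ∈ Γ(S²L* ⊗ L̄*). -/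
/-! Common framework: Courant algebroids over a smooth manifold, described through
their fibers, their (smooth) sections, scalar product, anchor and Dorfman bracket;
generalized connections, torsion, generalized metrics, `Bₙ`-generalized almost
complex structures on odd exact Courant algebroids, and generalized complex
structures on Courant algebroids of even rank. -/

open Manifold

variable {n : ℕ} {M : Type*} [TopologicalSpace M]
  [ChartedSpace (EuclideanSpace ℝ (Fin n)) M]
  [IsManifold (𝓡 n) (⊤ : ℕ∞) M]

namespace BnAux

open Manifold

noncomputable section

variable {n : ℕ} {M : Type*} [TopologicalSpace M]
  [ChartedSpace (EuclideanSpace ℝ (Fin n)) M]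
  [IsManifold (𝓡 n) (⊤ : ℕ∞) M]
  (E : OddExactCourantAlgebroid n M)

lemma secs_smul_const {u} (hu : u ∈ E.secs) (c : ℝ) : (fun x => c • u x) ∈ E.secs :=
  E.secs_smul contMDiff_const hu

/-- The subspace of values of smooth sections at a point. -/
def Sx (x : M) : Submodule ℝ (E.Fib x) where
  carrier := {a | ∃ u ∈ E.secs, u x = a}
  add_mem' := by rintro a b ⟨u, hu, rfl⟩ ⟨v, hv, rfl⟩; exact ⟨_, E.secs_add hu hv, rfl⟩
  zero_mem' := ⟨_, E.secs_zero, rfl⟩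
  smul_mem' := by rintro c a ⟨u, hu, rfl⟩; exact ⟨_, secs_smul_const E hu c, rfl⟩

lemma mem_Sx {x : M} {a : E.Fib x} : a ∈ Sx E x ↔ ∃ u ∈ E.secs, u x = a := Iff.rfl

lemma val_mem_Sx {u} (hu : u ∈ E.secs) (x : M) : u x ∈ Sx E x := ⟨u, hu, rfl⟩

open Classical in
/-- A chosen smooth section through a given value. -/
def sec (x : M) (a : E.Fib x) : ∀ y, E.Fib y :=
  if h : ∃ u ∈ E.secs, u x = a then h.choose else fun _ => 0

lemma sec_mem (x : M) (a : E.Fib x) : sec E x a ∈ E.secs := by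
  unfold sec
  split
  · next h => exact h.choose_spec.1
  · exact E.secs_zero

lemma sec_val {x : M} {a : E.Fib x} (h : a ∈ Sx E x) : sec E x a x = a := by
  unfold sec
  rw [dif_pos ((mem_Sx E).1 h)]
  exact ((mem_Sx E).1 h).choose_spec.2

variable (J : BnGACS E)

lemma g_F_u0 (x : M) : E.g x (J.F x (J.u₀ x)) (J.u₀ x) = 0 := by
  have h1 := J.skew x (J.u₀ x) (J.u₀ x)
  have h2 := E.g_symm x (J.u₀ x) (J.F x (J.u₀ x))
  linarith

lemma F2_u0 (x : M) : J.F x (J.F x (J.u₀ x)) = 0 := by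
  rw [J.F_sq x (J.u₀ x), J.u₀_norm x, ← pow_add, Even.neg_one_pow ⟨n, rfl⟩, one_smul]
  exact neg_add_cancel _

lemma F_u0 (x : M) : J.F x (J.u₀ x) = 0 := by
  have h := J.F_sq x (J.F x (J.u₀ x))
  rw [g_F_u0 E J x, mul_zero, zero_smul, add_zero, F2_u0 E J x, map_zero] at h
  rw [← neg_eq_zero]
  exact h.symm

lemma F3 (x : M) (v : E.Fib x) :
    J.F x (J.F x (J.F x v)) = -(J.F x v) := by
  rw [J.F_sq x v, map_add, map_neg, map_smul, F_u0 E J x, smul_zero, add_zero]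

lemma P0_eq (x : M) (v : E.Fib x) :
    v + J.F x (J.F x v) = ((-1 : ℝ) ^ n * E.g x v (J.u₀ x)) • J.u₀ x := by
  rw [J.F_sq x v]
  abel

variable (D Dt : GenConnection E.toCourantAlgebroid)

/-- The difference tensor of the two connections. -/
def del (u v : ∀ y, E.Fib y) (x : M) : E.Fib x := Dt.D u v x - D.D u v x

lemma Ia {u v w} (hu : u ∈ E.secs) (hv : v ∈ E.secs) (hw : w ∈ E.secs) (x : M) :
    E.g x (del E D Dt u v x) (w x) = - E.g x (v x) (del E D Dt u w x) := by
  have h1 := D.metric hv hw hu x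
  have h2 := Dt.metric hv hw hu x
  simp only [del, map_sub, LinearMap.sub_apply]
  linarith

lemma Ib {u v w} (hD1 : D.TorsionFree) (hDt1 : Dt.TorsionFree)
    (hu : u ∈ E.secs) (hv : v ∈ E.secs) (hw : w ∈ E.secs) (x : M) :
    E.g x (del E D Dt u v x) (w x)
      = E.g x (del E D Dt v u x) (w x) - E.g x (del E D Dt w u x) (v x) := by
  have h1 := hD1 hu hv hw x
  have h2 := hDt1 hu hv hw x
  simp only [GenConnection.torsion, map_sub, LinearMap.sub_apply] at h1 h2
  simp only [del, map_sub, LinearMap.sub_apply]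
  linarith

lemma Ic {u v} (hD2 : D.PreservesEnd J.F) (hDt2 : Dt.PreservesEnd J.F)
    (hu : u ∈ E.secs) (hv : v ∈ E.secs) (x : M) :
    del E D Dt u (J.ap v) x = J.F x (del E D Dt u v x) := by
  have h1 := hD2 hu hv x
  have h2 := hDt2 hu hv x
  show Dt.D u (fun y => J.F y (v y)) x - D.D u (fun y => J.F y (v y)) x = _
  rw [h1, h2, del, map_sub]

lemma Mform {u v w} (hD1 : D.TorsionFree) (hDt1 : Dt.TorsionFree)
    (hu : u ∈ E.secs) (hv : v ∈ E.secs) (hw : w ∈ E.secs) (x : M) :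
    E.g x (del E D Dt u v x) (w x)
      = E.g x (u x) (del E D Dt w v x - del E D Dt v w x) := by
  rw [Ib E D Dt hD1 hDt1 hu hv hw x, Ia E D Dt hv hu hw x, Ia E D Dt hw hu hv x]
  simp only [map_sub]
  ring

lemma VRg {u u' v v' w} (hD1 : D.TorsionFree) (hDt1 : Dt.TorsionFree)
    (hu : u ∈ E.secs) (hu' : u' ∈ E.secs) (hv : v ∈ E.secs) (hv' : v' ∈ E.secs)
    (hw : w ∈ E.secs) (x : M) (h1 : u x = u' x) (h2 : v x = v' x) :
    E.g x (del E D Dt u v x) (w x) = E.g x (del E D Dt u' v' x) (w x) := by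
  have s1 : E.g x (del E D Dt u v x) (w x) = E.g x (del E D Dt u v' x) (w x) := by
    rw [Ia E D Dt hu hv hw x, Ia E D Dt hu hv' hw x, h2]
  have s2 : E.g x (del E D Dt u v' x) (w x) = E.g x (del E D Dt u' v' x) (w x) := by
    rw [Mform E D Dt hD1 hDt1 hu hv' hw x, Mform E D Dt hD1 hDt1 hu' hv' hw x, h1]
  exact s1.trans s2

section Pointwise

variable {x : M}

lemma Sx_F {a : E.Fib x} (ha : a ∈ Sx E x) : J.F x a ∈ Sx E x := by
  obtain ⟨u, hu, rfl⟩ := ha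
  exact ⟨J.ap u, J.smooth hu, rfl⟩

/-- `1 + Φ + Φ²`. -/
def ph (v : E.Fib x) : E.Fib x := v + J.F x v + J.F x (J.F x v)

/-- `1 - Φ + Φ²`, the inverse of `ph`. -/
def psi (v : E.Fib x) : E.Fib x := v - J.F x v + J.F x (J.F x v)

lemma Sx_ph {a : E.Fib x} (ha : a ∈ Sx E x) : ph E J a ∈ Sx E x :=
  (Sx E x).add_mem ((Sx E x).add_mem ha (Sx_F E J ha)) (Sx_F E J (Sx_F E J ha))

lemma Sx_psi {a : E.Fib x} (ha : a ∈ Sx E x) : psi E J a ∈ Sx E x :=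
  (Sx E x).add_mem ((Sx E x).sub_mem ha (Sx_F E J ha)) (Sx_F E J (Sx_F E J ha))

lemma psi_ph (v : E.Fib x) : psi E J (ph E J v) = v := by
  simp only [psi, ph, map_add, map_sub, map_neg, F3]
  module

lemma ph_psi (v : E.Fib x) : ph E J (psi E J v) = v := by
  simp only [psi, ph, map_add, map_sub, map_neg, F3]
  module

lemma psi3 (v : E.Fib x) : psi E J (psi E J (psi E J v)) = ph E J v := by
  simp only [psi, ph, map_add, map_sub, map_neg, F3]
  module

lemma ph4 (v : E.Fib x) : ph E J (ph E J (ph E J (ph E J v))) = v := by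
  simp only [ph, map_add, map_sub, map_neg, F3]
  module

lemma ph_add (v w : E.Fib x) : ph E J (v + w) = ph E J v + ph E J w := by
  simp only [ph, map_add]; abel

lemma ph_smul (c : ℝ) (v : E.Fib x) : ph E J (c • v) = c • ph E J v := by
  simp only [ph, map_smul, smul_add]

lemma psi_add (v w : E.Fib x) : psi E J (v + w) = psi E J v + psi E J w := by
  simp only [psi, map_add]; abel

lemma psi_smul (c : ℝ) (v : E.Fib x) : psi E J (c • v) = c • psi E J v := by
  simp only [psi, map_smul, smul_add, smul_sub]

/-- A chosen complement of `Sx`. -/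
def compl (x : M) : Submodule ℝ (E.Fib x) := (Sx E x).exists_isCompl.choose

lemma compl_isCompl (x : M) : IsCompl (Sx E x) (compl E x) :=
  (Sx E x).exists_isCompl.choose_spec

/-- A plain linear projection onto `Sx`. -/
def rproj (v : E.Fib x) : E.Fib x :=
  ((Sx E x).linearProjOfIsCompl (compl E x) (compl_isCompl E x) v : E.Fib x)

lemma rproj_mem (v : E.Fib x) : rproj E v ∈ Sx E x := Submodule.coe_mem _

lemma rproj_fix {a : E.Fib x} (ha : a ∈ Sx E x) : rproj E a = a := by
  have := Submodule.linearProjOfIsCompl_apply_left (compl_isCompl E x) ⟨a, ha⟩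
  exact congrArg (Subtype.val) this

lemma rproj_add (v w : E.Fib x) : rproj E (v + w) = rproj E v + rproj E w := by
  simp only [rproj, map_add, Submodule.coe_add]

lemma rproj_smul (c : ℝ) (v : E.Fib x) : rproj E (c • v) = c • rproj E v := by
  simp only [rproj, map_smul, Submodule.coe_smul]

/-- The averaged projection onto `Sx`, commuting with `Φ`. -/
def pmap (v : E.Fib x) : E.Fib x :=
  (4 : ℝ)⁻¹ • (rproj E v + psi E J (rproj E (ph E J v))
    + psi E J (psi E J (rproj E (ph E J (ph E J v))))
    + psi E J (psi E J (psi E J (rproj E (ph E J (ph E J (ph E J v)))))))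

lemma p_mem (v : E.Fib x) : pmap E J v ∈ Sx E x := by
  refine (Sx E x).smul_mem _ ?_
  refine (Sx E x).add_mem ((Sx E x).add_mem ((Sx E x).add_mem ?_ ?_) ?_) ?_
  · exact rproj_mem E v
  · exact Sx_psi E J (rproj_mem E _)
  · exact Sx_psi E J (Sx_psi E J (rproj_mem E _))
  · exact Sx_psi E J (Sx_psi E J (Sx_psi E J (rproj_mem E _)))

lemma p_fix {a : E.Fib x} (ha : a ∈ Sx E x) : pmap E J a = a := by
  rw [pmap, rproj_fix E ha,
    rproj_fix E (Sx_ph E J ha), psi_ph,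
    rproj_fix E (Sx_ph E J (Sx_ph E J ha)), psi_ph, psi_ph,
    rproj_fix E (Sx_ph E J (Sx_ph E J (Sx_ph E J ha))), psi_ph, psi_ph, psi_ph]
  match_scalars <;> norm_num

lemma p_add (v w : E.Fib x) : pmap E J (v + w) = pmap E J v + pmap E J w := by
  simp only [pmap, ph_add, rproj_add, psi_add]
  module

lemma p_smul (c : ℝ) (v : E.Fib x) : pmap E J (c • v) = c • pmap E J v := by
  simp only [pmap, ph_smul, rproj_smul, psi_smul]
  module

lemma p_zero : pmap E J (0 : E.Fib x) = 0 := by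
  have := p_smul E J (0 : ℝ) (0 : E.Fib x)
  simpa using this

lemma p_ph (v : E.Fib x) : pmap E J (ph E J v) = ph E J (pmap E J v) := by
  simp only [pmap, ph_add, ph_smul, ph_psi, ph4]
  rw [psi3]
  module

lemma F_eq_ph (v : E.Fib x) :
    J.F x v = ph E J v - (2 : ℝ)⁻¹ • v - (2 : ℝ)⁻¹ • ph E J (ph E J v) := by
  simp only [ph, map_add, map_sub, map_neg, F3]
  module

lemma p_sub (v w : E.Fib x) : pmap E J (v - w) = pmap E J v - pmap E J w := by
  have h : v - w = v + (-1 : ℝ) • w := by module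
  rw [h, p_add, p_smul]
  module

lemma p_comm (v : E.Fib x) : pmap E J (J.F x v) = J.F x (pmap E J v) := by
  rw [F_eq_ph E J v, p_sub, p_sub, p_smul, p_smul, p_ph, p_ph, p_ph,
    F_eq_ph E J (pmap E J v)]

end Pointwise

section FormA

lemma del_add_dir {u u' v} (hu : u ∈ E.secs) (hu' : u' ∈ E.secs) (hv : v ∈ E.secs)
    (x : M) : del E D Dt (fun y => u y + u' y) v x = del E D Dt u v x + del E D Dt u' v x := by
  have d1 := congrFun (D.add_dir hu hu' hv) x
  have d2 := congrFun (Dt.add_dir hu hu' hv) x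
  simp only [del, d1, d2]
  abel

lemma del_smul_dir (c : ℝ) {u v} (hu : u ∈ E.secs) (hv : v ∈ E.secs) (x : M) :
    del E D Dt (fun y => c • u y) v x = c • del E D Dt u v x := by
  have d1 := congrFun (D.smul_dir (f := fun _ => c) contMDiff_const hu hv) x
  have d2 := congrFun (Dt.smul_dir (f := fun _ => c) contMDiff_const hu hv) x
  simp only [del]
  rw [d1, d2, smul_sub]

lemma del_add_sec {u v v'} (hu : u ∈ E.secs) (hv : v ∈ E.secs) (hv' : v' ∈ E.secs)
    (x : M) : del E D Dt u (fun y => v y + v' y) x = del E D Dt u v x + del E D Dt u v' x := by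
  have d1 := congrFun (D.add_sec hu hv hv') x
  have d2 := congrFun (Dt.add_sec hu hv hv') x
  simp only [del, d1, d2]
  abel

lemma del_smul_sec (c : ℝ) {u v} (hu : u ∈ E.secs) (hv : v ∈ E.secs) (x : M) :
    del E D Dt u (fun y => c • v y) x = c • del E D Dt u v x := by
  have d1 := congrFun (D.smul_sec c hu hv) x
  have d2 := congrFun (Dt.smul_sec c hu hv) x
  simp only [del]
  rw [d1, d2, smul_sub]

/-- The pointwise difference tensor, extended to the whole fiber via `pmap`. -/
def Aform (x : M) (a b c : E.Fib x) : ℝ :=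
  E.g x (del E D Dt (sec E x (pmap E J a)) (sec E x (pmap E J b)) x) (pmap E J c)

variable (hD1 : D.TorsionFree) (hDt1 : Dt.TorsionFree)
  (hD2 : D.PreservesEnd J.F) (hDt2 : Dt.PreservesEnd J.F)

include hD1 hDt1 hD2 hDt2

lemma A_secs {u v w} (hu : u ∈ E.secs) (hv : v ∈ E.secs) (hw : w ∈ E.secs) (x : M) :
    Aform E J D Dt x (u x) (v x) (w x) = E.g x (del E D Dt u v x) (w x) := by
  simp only [Aform, p_fix E J (val_mem_Sx E hu x), p_fix E J (val_mem_Sx E hv x),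
      p_fix E J (val_mem_Sx E hw x)]
  exact VRg E D Dt hD1 hDt1 (sec_mem E x (u x)) hu (sec_mem E x (v x)) hv hw x
    (by rw [sec_val E (val_mem_Sx E hu x)]) (by rw [sec_val E (val_mem_Sx E hv x)])

lemma A_Ra (x : M) (a b c : E.Fib x) :
    Aform E J D Dt x a b c = - Aform E J D Dt x a c b := by
  have h := Ia E D Dt (sec_mem E x (pmap E J a)) (sec_mem E x (pmap E J b))
      (sec_mem E x (pmap E J c)) x
  rw [sec_val E (p_mem E J c), sec_val E (p_mem E J b),
      E.g_symm x (pmap E J b)] at h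
  simpa only [Aform] using h

lemma A_swap (x : M) (a b c : E.Fib x) :
    Aform E J D Dt x a b c = Aform E J D Dt x b a c - Aform E J D Dt x c a b := by
  have h := Ib E D Dt hD1 hDt1 (sec_mem E x (pmap E J a)) (sec_mem E x (pmap E J b))
      (sec_mem E x (pmap E J c)) x
  rw [sec_val E (p_mem E J c), sec_val E (p_mem E J b)] at h
  simpa only [Aform] using h

lemma A_Rc (x : M) (a b c : E.Fib x) :
    Aform E J D Dt x a (J.F x b) c = - Aform E J D Dt x a b (J.F x c) := by
  have hmem : J.F x (pmap E J b) ∈ Sx E x := Sx_F E J (p_mem E J b)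
  have hV := VRg E D Dt hD1 hDt1 (sec_mem E x (pmap E J a)) (sec_mem E x (pmap E J a))
      (sec_mem E x (J.F x (pmap E J b))) (J.smooth (sec_mem E x (pmap E J b)))
      (sec_mem E x (pmap E J c)) x rfl
      (by rw [sec_val E hmem]; exact (congrArg (J.F x) (sec_val E (p_mem E J b))).symm)
  have hIc := Ic E J D Dt hD2 hDt2 (sec_mem E x (pmap E J a)) (sec_mem E x (pmap E J b)) x
  have hIc' : del E D Dt (sec E x (pmap E J a))
      (fun y => J.F y (sec E x (pmap E J b) y)) x
        = J.F x (del E D Dt (sec E x (pmap E J a)) (sec E x (pmap E J b)) x) := hIc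
  rw [sec_val E (p_mem E J c)] at hV
  simp only [Aform, p_comm E J]
  rw [hV, hIc', J.skew]

lemma A_add1 (x : M) (a a' b c : E.Fib x) :
    Aform E J D Dt x (a + a') b c
      = Aform E J D Dt x a b c + Aform E J D Dt x a' b c := by
  have hsum : (fun y => sec E x (pmap E J a) y + sec E x (pmap E J a') y) ∈ E.secs :=
    E.secs_add (sec_mem E x _) (sec_mem E x _)
  have hval : sec E x (pmap E J (a + a')) x
      = sec E x (pmap E J a) x + sec E x (pmap E J a') x := by
    rw [sec_val E (p_mem E J _), sec_val E (p_mem E J _), sec_val E (p_mem E J _), p_add]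
  have hV := VRg E D Dt hD1 hDt1 (sec_mem E x (pmap E J (a + a'))) hsum
      (sec_mem E x (pmap E J b)) (sec_mem E x (pmap E J b))
      (sec_mem E x (pmap E J c)) x hval rfl
  rw [sec_val E (p_mem E J c)] at hV
  simp only [Aform]
  rw [hV, del_add_dir E D Dt (sec_mem E x _) (sec_mem E x _) (sec_mem E x _) x, map_add,
    LinearMap.add_apply]

lemma A_smul1 (x : M) (r : ℝ) (a b c : E.Fib x) :
    Aform E J D Dt x (r • a) b c = r * Aform E J D Dt x a b c := by
  have hsm : (fun y => r • sec E x (pmap E J a) y) ∈ E.secs :=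
    secs_smul_const E (sec_mem E x _) r
  have hval : sec E x (pmap E J (r • a)) x = r • sec E x (pmap E J a) x := by
    rw [sec_val E (p_mem E J _), sec_val E (p_mem E J _), p_smul]
  have hV := VRg E D Dt hD1 hDt1 (sec_mem E x (pmap E J (r • a))) hsm
      (sec_mem E x (pmap E J b)) (sec_mem E x (pmap E J b))
      (sec_mem E x (pmap E J c)) x hval rfl
  rw [sec_val E (p_mem E J c)] at hV
  simp only [Aform]
  rw [hV, del_smul_dir E D Dt r (sec_mem E x _) (sec_mem E x _) x, map_smul,
    LinearMap.smul_apply, smul_eq_mul]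

lemma A_add2 (x : M) (a b b' c : E.Fib x) :
    Aform E J D Dt x a (b + b') c
      = Aform E J D Dt x a b c + Aform E J D Dt x a b' c := by
  have hsum : (fun y => sec E x (pmap E J b) y + sec E x (pmap E J b') y) ∈ E.secs :=
    E.secs_add (sec_mem E x _) (sec_mem E x _)
  have hval : sec E x (pmap E J (b + b')) x
      = sec E x (pmap E J b) x + sec E x (pmap E J b') x := by
    rw [sec_val E (p_mem E J _), sec_val E (p_mem E J _), sec_val E (p_mem E J _), p_add]
  have hV := VRg E D Dt hD1 hDt1 (sec_mem E x (pmap E J a)) (sec_mem E x (pmap E J a))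
      (sec_mem E x (pmap E J (b + b'))) hsum (sec_mem E x (pmap E J c)) x rfl hval
  rw [sec_val E (p_mem E J c)] at hV
  simp only [Aform]
  rw [hV, del_add_sec E D Dt (sec_mem E x _) (sec_mem E x _) (sec_mem E x _) x, map_add,
    LinearMap.add_apply]

lemma A_smul2 (x : M) (r : ℝ) (a b c : E.Fib x) :
    Aform E J D Dt x a (r • b) c = r * Aform E J D Dt x a b c := by
  have hsm : (fun y => r • sec E x (pmap E J b) y) ∈ E.secs :=
    secs_smul_const E (sec_mem E x _) r
  have hval : sec E x (pmap E J (r • b)) x = r • sec E x (pmap E J b) x := by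
    rw [sec_val E (p_mem E J _), sec_val E (p_mem E J _), p_smul]
  have hV := VRg E D Dt hD1 hDt1 (sec_mem E x (pmap E J a)) (sec_mem E x (pmap E J a))
      (sec_mem E x (pmap E J (r • b))) hsm (sec_mem E x (pmap E J c)) x rfl hval
  rw [sec_val E (p_mem E J c)] at hV
  simp only [Aform]
  rw [hV, del_smul_sec E D Dt r (sec_mem E x _) (sec_mem E x _) x, map_smul,
    LinearMap.smul_apply, smul_eq_mul]

lemma A_add3 (x : M) (a b c c' : E.Fib x) :
    Aform E J D Dt x a b (c + c')
      = Aform E J D Dt x a b c + Aform E J D Dt x a b c' := by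
  simp only [Aform, p_add, map_add]

lemma A_smul3 (x : M) (r : ℝ) (a b c : E.Fib x) :
    Aform E J D Dt x a b (r • c) = r * Aform E J D Dt x a b c := by
  simp only [Aform, p_smul, map_smul, smul_eq_mul]

lemma A_neg1 (x : M) (a b c : E.Fib x) :
    Aform E J D Dt x (-a) b c = - Aform E J D Dt x a b c := by
  rw [← neg_one_smul ℝ a, A_smul1 E J D Dt hD1 hDt1 hD2 hDt2, neg_one_mul]

lemma A_neg2 (x : M) (a b c : E.Fib x) :
    Aform E J D Dt x a (-b) c = - Aform E J D Dt x a b c := by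
  rw [← neg_one_smul ℝ b, A_smul2 E J D Dt hD1 hDt1 hD2 hDt2, neg_one_mul]

lemma A_neg3 (x : M) (a b c : E.Fib x) :
    Aform E J D Dt x a b (-c) = - Aform E J D Dt x a b c := by
  rw [← neg_one_smul ℝ c, A_smul3 E J D Dt hD1 hDt1 hD2 hDt2, neg_one_mul]

lemma A_sub1 (x : M) (a a' b c : E.Fib x) :
    Aform E J D Dt x (a - a') b c
      = Aform E J D Dt x a b c - Aform E J D Dt x a' b c := by
  rw [sub_eq_add_neg, A_add1 E J D Dt hD1 hDt1 hD2 hDt2, A_neg1 E J D Dt hD1 hDt1 hD2 hDt2, ← sub_eq_add_neg]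

lemma A_sub2 (x : M) (a b b' c : E.Fib x) :
    Aform E J D Dt x a (b - b') c
      = Aform E J D Dt x a b c - Aform E J D Dt x a b' c := by
  rw [sub_eq_add_neg, A_add2 E J D Dt hD1 hDt1 hD2 hDt2, A_neg2 E J D Dt hD1 hDt1 hD2 hDt2, ← sub_eq_add_neg]

lemma A_sub3 (x : M) (a b c c' : E.Fib x) :
    Aform E J D Dt x a b (c - c')
      = Aform E J D Dt x a b c - Aform E J D Dt x a b c' := by
  rw [sub_eq_add_neg, A_add3 E J D Dt hD1 hDt1 hD2 hDt2, A_neg3 E J D Dt hD1 hDt1 hD2 hDt2, ← sub_eq_add_neg]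

lemma A_zero3 (x : M) (a b : E.Fib x) : Aform E J D Dt x a b 0 = 0 := by
  have := A_smul3 E J D Dt hD1 hDt1 hD2 hDt2 x (0 : ℝ) a b 0
  simpa using this

lemma A_u0_3 (x : M) (a b : E.Fib x) : Aform E J D Dt x a b (J.u₀ x) = 0 := by
  have hb : b = ((-1 : ℝ) ^ n * E.g x b (J.u₀ x)) • J.u₀ x - J.F x (J.F x b) := by
    rw [← P0_eq E J x b]; abel
  have h1 : Aform E J D Dt x a (J.F x (J.F x b)) (J.u₀ x) = 0 := by
    rw [A_Rc E J D Dt hD1 hDt1 hD2 hDt2, F_u0 E J x, A_zero3 E J D Dt hD1 hDt1 hD2 hDt2, neg_zero]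
  have h2 : Aform E J D Dt x a (J.u₀ x) (J.u₀ x) = 0 := by
    have := A_Ra E J D Dt hD1 hDt1 hD2 hDt2 x a (J.u₀ x) (J.u₀ x)
    linarith
  conv_lhs => rw [hb]
  rw [A_sub2 E J D Dt hD1 hDt1 hD2 hDt2, A_smul2 E J D Dt hD1 hDt1 hD2 hDt2, h1, h2, mul_zero, sub_zero]

lemma A_u0_2 (x : M) (a c : E.Fib x) : Aform E J D Dt x a (J.u₀ x) c = 0 := by
  rw [A_Ra E J D Dt hD1 hDt1 hD2 hDt2, A_u0_3 E J D Dt hD1 hDt1 hD2 hDt2, neg_zero]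

lemma A_u0_1 (x : M) (b c : E.Fib x) : Aform E J D Dt x (J.u₀ x) b c = 0 := by
  rw [A_swap E J D Dt hD1 hDt1 hD2 hDt2, A_u0_2 E J D Dt hD1 hDt1 hD2 hDt2,
    A_u0_2 E J D Dt hD1 hDt1 hD2 hDt2, sub_zero]

lemma AF2 (x : M) (a b c : E.Fib x) :
    Aform E J D Dt x (J.F x (J.F x a)) b (J.F x (J.F x c)) = Aform E J D Dt x a b c := by
  have ha : J.F x (J.F x a) = ((-1 : ℝ) ^ n * E.g x a (J.u₀ x)) • J.u₀ x - a := by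
    rw [← P0_eq E J x a]; abel
  have hc : J.F x (J.F x c) = ((-1 : ℝ) ^ n * E.g x c (J.u₀ x)) • J.u₀ x - c := by
    rw [← P0_eq E J x c]; abel
  rw [ha, hc]
  simp only [A_sub1 E J D Dt hD1 hDt1 hD2 hDt2, A_sub3 E J D Dt hD1 hDt1 hD2 hDt2,
    A_smul1 E J D Dt hD1 hDt1 hD2 hDt2, A_smul3 E J D Dt hD1 hDt1 hD2 hDt2,
    A_u0_1 E J D Dt hD1 hDt1 hD2 hDt2, A_u0_3 E J D Dt hD1 hDt1 hD2 hDt2]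
  ring

end FormA

section FormB

/-- Real part of the form `η`. -/
def re3 (x : M) (a b c : E.Fib x) : ℝ :=
  -(4 : ℝ)⁻¹ * (Aform E J D Dt x (J.F x (J.F x a)) (J.F x (J.F x b)) (J.F x (J.F x c))
    - Aform E J D Dt x (J.F x a) (J.F x b) (J.F x (J.F x c))
    + Aform E J D Dt x (J.F x a) (J.F x (J.F x b)) (J.F x c)
    + Aform E J D Dt x (J.F x (J.F x a)) (J.F x b) (J.F x c))

/-- Imaginary part of the form `η`. -/
def im3 (x : M) (a b c : E.Fib x) : ℝ :=
  -(4 : ℝ)⁻¹ * (Aform E J D Dt x (J.F x a) (J.F x (J.F x b)) (J.F x (J.F x c))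
    + Aform E J D Dt x (J.F x (J.F x a)) (J.F x b) (J.F x (J.F x c))
    - Aform E J D Dt x (J.F x (J.F x a)) (J.F x (J.F x b)) (J.F x c)
    + Aform E J D Dt x (J.F x a) (J.F x b) (J.F x c))

/-- The form `η`, as a complex-valued real-trilinear map. -/
def eta (x : M) (a b c : E.Fib x) : ℂ :=
  ⟨re3 E J D Dt x a b c, im3 E J D Dt x a b c⟩

variable (hD1 : D.TorsionFree) (hDt1 : Dt.TorsionFree)
  (hD2 : D.PreservesEnd J.F) (hDt2 : Dt.PreservesEnd J.F)

include hD1 hDt1 hD2 hDt2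

lemma re3_symm (x : M) (a b c : E.Fib x) :
    re3 E J D Dt x b a c = re3 E J D Dt x a b c := by
  have h1 := A_swap E J D Dt hD1 hDt1 hD2 hDt2 x
    (J.F x (J.F x b)) (J.F x (J.F x a)) (J.F x (J.F x c))
  have h2 := A_swap E J D Dt hD1 hDt1 hD2 hDt2 x (J.F x b) (J.F x a) (J.F x (J.F x c))
  have h3 := A_swap E J D Dt hD1 hDt1 hD2 hDt2 x (J.F x b) (J.F x (J.F x a)) (J.F x c)
  have h4 := A_swap E J D Dt hD1 hDt1 hD2 hDt2 x (J.F x (J.F x b)) (J.F x a) (J.F x c)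
  simp only [re3]
  rw [h1, h2, h3, h4]
  simp only [A_Rc E J D Dt hD1 hDt1 hD2 hDt2, F3 E J, map_neg,
    A_neg1 E J D Dt hD1 hDt1 hD2 hDt2, A_neg2 E J D Dt hD1 hDt1 hD2 hDt2,
    A_neg3 E J D Dt hD1 hDt1 hD2 hDt2, neg_neg]
  ring

lemma im3_symm (x : M) (a b c : E.Fib x) :
    im3 E J D Dt x b a c = im3 E J D Dt x a b c := by
  have h1 := A_swap E J D Dt hD1 hDt1 hD2 hDt2 x (J.F x b) (J.F x (J.F x a)) (J.F x (J.F x c))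
  have h2 := A_swap E J D Dt hD1 hDt1 hD2 hDt2 x (J.F x (J.F x b)) (J.F x a) (J.F x (J.F x c))
  have h3 := A_swap E J D Dt hD1 hDt1 hD2 hDt2 x
    (J.F x (J.F x b)) (J.F x (J.F x a)) (J.F x c)
  have h4 := A_swap E J D Dt hD1 hDt1 hD2 hDt2 x (J.F x b) (J.F x a) (J.F x c)
  simp only [im3]
  rw [h1, h2, h3, h4]
  simp only [A_Rc E J D Dt hD1 hDt1 hD2 hDt2, F3 E J, map_neg,
    A_neg1 E J D Dt hD1 hDt1 hD2 hDt2, A_neg2 E J D Dt hD1 hDt1 hD2 hDt2,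
    A_neg3 E J D Dt hD1 hDt1 hD2 hDt2, neg_neg]
  ring

lemma re3_F1 (x : M) (a b c : E.Fib x) :
    re3 E J D Dt x (J.F x a) b c = - im3 E J D Dt x a b c := by
  simp only [re3, im3, F3 E J, map_neg, A_neg1 E J D Dt hD1 hDt1 hD2 hDt2,
    A_neg2 E J D Dt hD1 hDt1 hD2 hDt2, A_neg3 E J D Dt hD1 hDt1 hD2 hDt2, neg_neg]
  ring

lemma im3_F1 (x : M) (a b c : E.Fib x) :
    im3 E J D Dt x (J.F x a) b c = re3 E J D Dt x a b c := by
  simp only [re3, im3, F3 E J, map_neg, A_neg1 E J D Dt hD1 hDt1 hD2 hDt2,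
    A_neg2 E J D Dt hD1 hDt1 hD2 hDt2, A_neg3 E J D Dt hD1 hDt1 hD2 hDt2, neg_neg]
  ring

lemma re3_F2 (x : M) (a b c : E.Fib x) :
    re3 E J D Dt x a (J.F x b) c = - im3 E J D Dt x a b c := by
  simp only [re3, im3, F3 E J, map_neg, A_neg1 E J D Dt hD1 hDt1 hD2 hDt2,
    A_neg2 E J D Dt hD1 hDt1 hD2 hDt2, A_neg3 E J D Dt hD1 hDt1 hD2 hDt2, neg_neg]
  ring

lemma im3_F2 (x : M) (a b c : E.Fib x) :
    im3 E J D Dt x a (J.F x b) c = re3 E J D Dt x a b c := by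
  simp only [re3, im3, F3 E J, map_neg, A_neg1 E J D Dt hD1 hDt1 hD2 hDt2,
    A_neg2 E J D Dt hD1 hDt1 hD2 hDt2, A_neg3 E J D Dt hD1 hDt1 hD2 hDt2, neg_neg]
  ring

lemma re3_F3 (x : M) (a b c : E.Fib x) :
    re3 E J D Dt x a b (J.F x c) = im3 E J D Dt x a b c := by
  simp only [re3, im3, F3 E J, map_neg, A_neg1 E J D Dt hD1 hDt1 hD2 hDt2,
    A_neg2 E J D Dt hD1 hDt1 hD2 hDt2, A_neg3 E J D Dt hD1 hDt1 hD2 hDt2, neg_neg]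
  ring

lemma im3_F3 (x : M) (a b c : E.Fib x) :
    im3 E J D Dt x a b (J.F x c) = - re3 E J D Dt x a b c := by
  simp only [re3, im3, F3 E J, map_neg, A_neg1 E J D Dt hD1 hDt1 hD2 hDt2,
    A_neg2 E J D Dt hD1 hDt1 hD2 hDt2, A_neg3 E J D Dt hD1 hDt1 hD2 hDt2, neg_neg]
  ring

lemma resk (x : M) (a b c : E.Fib x) :
    re3 E J D Dt x a b c - re3 E J D Dt x a c b = Aform E J D Dt x a b c := by
  have e1 := A_Ra E J D Dt hD1 hDt1 hD2 hDt2 x (J.F x (J.F x a)) c (J.F x (J.F x b))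
  have e2 := A_Ra E J D Dt hD1 hDt1 hD2 hDt2 x (J.F x a) c (J.F x b)
  have e3 := AF2 E J D Dt hD1 hDt1 hD2 hDt2 x a b c
  simp only [re3]
  simp only [A_Rc E J D Dt hD1 hDt1 hD2 hDt2, F3 E J, map_neg,
    A_neg1 E J D Dt hD1 hDt1 hD2 hDt2, A_neg2 E J D Dt hD1 hDt1 hD2 hDt2,
    A_neg3 E J D Dt hD1 hDt1 hD2 hDt2, neg_neg, e1, e2, e3]
  ring

lemma re3_add1 (x : M) (a a' b c : E.Fib x) :
    re3 E J D Dt x (a + a') b c = re3 E J D Dt x a b c + re3 E J D Dt x a' b c := by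
  simp only [re3, map_add, A_add1 E J D Dt hD1 hDt1 hD2 hDt2]; ring

lemma im3_add1 (x : M) (a a' b c : E.Fib x) :
    im3 E J D Dt x (a + a') b c = im3 E J D Dt x a b c + im3 E J D Dt x a' b c := by
  simp only [im3, map_add, A_add1 E J D Dt hD1 hDt1 hD2 hDt2]; ring

lemma re3_smul1 (x : M) (r : ℝ) (a b c : E.Fib x) :
    re3 E J D Dt x (r • a) b c = r * re3 E J D Dt x a b c := by
  simp only [re3, map_smul, A_smul1 E J D Dt hD1 hDt1 hD2 hDt2]; ring

lemma im3_smul1 (x : M) (r : ℝ) (a b c : E.Fib x) :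
    im3 E J D Dt x (r • a) b c = r * im3 E J D Dt x a b c := by
  simp only [im3, map_smul, A_smul1 E J D Dt hD1 hDt1 hD2 hDt2]; ring

lemma re3_add2 (x : M) (a b b' c : E.Fib x) :
    re3 E J D Dt x a (b + b') c = re3 E J D Dt x a b c + re3 E J D Dt x a b' c := by
  simp only [re3, map_add, A_add2 E J D Dt hD1 hDt1 hD2 hDt2]; ring

lemma im3_add2 (x : M) (a b b' c : E.Fib x) :
    im3 E J D Dt x a (b + b') c = im3 E J D Dt x a b c + im3 E J D Dt x a b' c := by
  simp only [im3, map_add, A_add2 E J D Dt hD1 hDt1 hD2 hDt2]; ring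

lemma re3_smul2 (x : M) (r : ℝ) (a b c : E.Fib x) :
    re3 E J D Dt x a (r • b) c = r * re3 E J D Dt x a b c := by
  simp only [re3, map_smul, A_smul2 E J D Dt hD1 hDt1 hD2 hDt2]; ring

lemma im3_smul2 (x : M) (r : ℝ) (a b c : E.Fib x) :
    im3 E J D Dt x a (r • b) c = r * im3 E J D Dt x a b c := by
  simp only [im3, map_smul, A_smul2 E J D Dt hD1 hDt1 hD2 hDt2]; ring

lemma re3_add3 (x : M) (a b c c' : E.Fib x) :
    re3 E J D Dt x a b (c + c') = re3 E J D Dt x a b c + re3 E J D Dt x a b c' := by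
  simp only [re3, map_add, A_add3 E J D Dt hD1 hDt1 hD2 hDt2]; ring

lemma im3_add3 (x : M) (a b c c' : E.Fib x) :
    im3 E J D Dt x a b (c + c') = im3 E J D Dt x a b c + im3 E J D Dt x a b c' := by
  simp only [im3, map_add, A_add3 E J D Dt hD1 hDt1 hD2 hDt2]; ring

lemma re3_smul3 (x : M) (r : ℝ) (a b c : E.Fib x) :
    re3 E J D Dt x a b (r • c) = r * re3 E J D Dt x a b c := by
  simp only [re3, map_smul, A_smul3 E J D Dt hD1 hDt1 hD2 hDt2]; ring

lemma im3_smul3 (x : M) (r : ℝ) (a b c : E.Fib x) :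
    im3 E J D Dt x a b (r • c) = r * im3 E J D Dt x a b c := by
  simp only [im3, map_smul, A_smul3 E J D Dt hD1 hDt1 hD2 hDt2]; ring

/-- The bundled trilinear version of `η`. -/
def etaL (x : M) : E.Fib x →ₗ[ℝ] E.Fib x →ₗ[ℝ] E.Fib x →ₗ[ℝ] ℂ where
  toFun a :=
    { toFun := fun b =>
        { toFun := fun c => eta E J D Dt x a b c
          map_add' := fun c c' => by
            apply Complex.ext
            · exact re3_add3 E J D Dt hD1 hDt1 hD2 hDt2 x a b c c'
            · exact im3_add3 E J D Dt hD1 hDt1 hD2 hDt2 x a b c c'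
          map_smul' := fun r c => by
            apply Complex.ext
            · simpa [Complex.smul_re, eta] using re3_smul3 E J D Dt hD1 hDt1 hD2 hDt2 x r a b c
            · simpa [Complex.smul_im, eta] using im3_smul3 E J D Dt hD1 hDt1 hD2 hDt2 x r a b c }
      map_add' := fun b b' => by
        apply LinearMap.ext; intro c
        apply Complex.ext
        · exact re3_add2 E J D Dt hD1 hDt1 hD2 hDt2 x a b b' c
        · exact im3_add2 E J D Dt hD1 hDt1 hD2 hDt2 x a b b' c
      map_smul' := fun r b => by
        apply LinearMap.ext; intro c
        apply Complex.ext
        · simpa [Complex.smul_re, eta] using re3_smul2 E J D Dt hD1 hDt1 hD2 hDt2 x r a b c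
        · simpa [Complex.smul_im, eta] using im3_smul2 E J D Dt hD1 hDt1 hD2 hDt2 x r a b c }
  map_add' a a' := by
    apply LinearMap.ext; intro b
    apply LinearMap.ext; intro c
    apply Complex.ext
    · exact re3_add1 E J D Dt hD1 hDt1 hD2 hDt2 x a a' b c
    · exact im3_add1 E J D Dt hD1 hDt1 hD2 hDt2 x a a' b c
  map_smul' r a := by
    apply LinearMap.ext; intro b
    apply LinearMap.ext; intro c
    apply Complex.ext
    · simpa [Complex.smul_re, eta] using re3_smul1 E J D Dt hD1 hDt1 hD2 hDt2 x r a b c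
    · simpa [Complex.smul_im, eta] using im3_smul1 E J D Dt hD1 hDt1 hD2 hDt2 x r a b c

lemma etaL_apply (x : M) (a b c : E.Fib x) :
    etaL E J D Dt hD1 hDt1 hD2 hDt2 x a b c = eta E J D Dt x a b c := rfl

end FormB

end

end BnAux
/-- Let `𝓕` be a `Bₙ`-generalized complex structure on an odd exact
Courant algebroid `E` with i-eigenbundle `L ⊂ E^ℂ`.  Any two `Bₙ`-complex generalized
connections `D, D̃` (torsion-free generalized connections preserving `𝓕`) are related
by `D̃ = D + Re(sk η)` for some `η ∈ Γ(S²L* ⊗ L̄*)`.  Here `η` is encoded as a family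
of ℝ-trilinear complex-valued forms (the restriction of the ℂ-trilinear form to real
vectors); the conditions `η(𝓕u,v,w) = iη(u,v,w)`, `η(u,𝓕v,w) = iη(u,v,w)` and
`η(u,v,𝓕w) = −iη(u,v,w)` express that `η` lies in `S²L*⊗L̄*` (extended by zero via
`E^ℂ = L ⊕ L̄ ⊕ U^ℂ`), and `(sk η)(u,v,w) = η(u,v,w) − η(u,w,v)`. -/
theorem bn_complex_connections_difference
    (E : OddExactCourantAlgebroid n M) (J : BnGACS E) (hint : J.Integrable)
    (D Dt : GenConnection E.toCourantAlgebroid)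
    (hD : D.TorsionFree ∧ D.PreservesEnd J.F)
    (hDt : Dt.TorsionFree ∧ Dt.PreservesEnd J.F) :
    ∃ η : ∀ x, E.Fib x →ₗ[ℝ] E.Fib x →ₗ[ℝ] E.Fib x →ₗ[ℝ] ℂ,
      (∀ x u v w, η x u v w = η x v u w) ∧
      (∀ x u v w, η x (J.F x u) v w = Complex.I * η x u v w) ∧
      (∀ x u v w, η x u (J.F x v) w = Complex.I * η x u v w) ∧
      (∀ x u v w, η x u v (J.F x w) = -(Complex.I * η x u v w)) ∧
      ∀ u v w, u ∈ E.secs → v ∈ E.secs → w ∈ E.secs → ∀ x,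
        E.g x (Dt.D u v x) (w x)
          = E.g x (D.D u v x) (w x)
            + (η x (u x) (v x) (w x) - η x (u x) (w x) (v x)).re := by
  obtain ⟨hD1, hD2⟩ := hD
  obtain ⟨hDt1, hDt2⟩ := hDt
  refine ⟨fun x => BnAux.etaL E J D Dt hD1 hDt1 hD2 hDt2 x, ?_, ?_, ?_, ?_, ?_⟩
  · intro x u v w
    show BnAux.eta E J D Dt x u v w = BnAux.eta E J D Dt x v u w
    apply Complex.ext
    · exact BnAux.re3_symm E J D Dt hD1 hDt1 hD2 hDt2 x v u w
    · exact BnAux.im3_symm E J D Dt hD1 hDt1 hD2 hDt2 x v u w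
  · intro x u v w
    show BnAux.eta E J D Dt x (J.F x u) v w = Complex.I * BnAux.eta E J D Dt x u v w
    apply Complex.ext
    · rw [Complex.mul_re, Complex.I_re, Complex.I_im]
      show BnAux.re3 E J D Dt x (J.F x u) v w = _
      rw [BnAux.re3_F1 E J D Dt hD1 hDt1 hD2 hDt2]
      show _ = 0 * BnAux.re3 E J D Dt x u v w - 1 * BnAux.im3 E J D Dt x u v w
      ring
    · rw [Complex.mul_im, Complex.I_re, Complex.I_im]
      show BnAux.im3 E J D Dt x (J.F x u) v w = _
      rw [BnAux.im3_F1 E J D Dt hD1 hDt1 hD2 hDt2]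
      show _ = 0 * BnAux.im3 E J D Dt x u v w + 1 * BnAux.re3 E J D Dt x u v w
      ring
  · intro x u v w
    show BnAux.eta E J D Dt x u (J.F x v) w = Complex.I * BnAux.eta E J D Dt x u v w
    apply Complex.ext
    · rw [Complex.mul_re, Complex.I_re, Complex.I_im]
      show BnAux.re3 E J D Dt x u (J.F x v) w = _
      rw [BnAux.re3_F2 E J D Dt hD1 hDt1 hD2 hDt2]
      show _ = 0 * BnAux.re3 E J D Dt x u v w - 1 * BnAux.im3 E J D Dt x u v w
      ring
    · rw [Complex.mul_im, Complex.I_re, Complex.I_im]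
      show BnAux.im3 E J D Dt x u (J.F x v) w = _
      rw [BnAux.im3_F2 E J D Dt hD1 hDt1 hD2 hDt2]
      show _ = 0 * BnAux.im3 E J D Dt x u v w + 1 * BnAux.re3 E J D Dt x u v w
      ring
  · intro x u v w
    show BnAux.eta E J D Dt x u v (J.F x w)
      = -(Complex.I * BnAux.eta E J D Dt x u v w)
    apply Complex.ext
    · rw [Complex.neg_re, Complex.mul_re, Complex.I_re, Complex.I_im]
      show BnAux.re3 E J D Dt x u v (J.F x w) = _
      rw [BnAux.re3_F3 E J D Dt hD1 hDt1 hD2 hDt2]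
      show _ = -(0 * BnAux.re3 E J D Dt x u v w - 1 * BnAux.im3 E J D Dt x u v w)
      ring
    · rw [Complex.neg_im, Complex.mul_im, Complex.I_re, Complex.I_im]
      show BnAux.im3 E J D Dt x u v (J.F x w) = _
      rw [BnAux.im3_F3 E J D Dt hD1 hDt1 hD2 hDt2]
      show _ = -(0 * BnAux.im3 E J D Dt x u v w + 1 * BnAux.re3 E J D Dt x u v w)
      ring
  · intro u v w hu hv hw x
    have hre : (BnAux.etaL E J D Dt hD1 hDt1 hD2 hDt2 x (u x) (v x) (w x)
        - BnAux.etaL E J D Dt hD1 hDt1 hD2 hDt2 x (u x) (w x) (v x)).re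
        = BnAux.re3 E J D Dt x (u x) (v x) (w x)
          - BnAux.re3 E J D Dt x (u x) (w x) (v x) := by
      rw [Complex.sub_re]; rfl
    rw [hre, BnAux.resk E J D Dt hD1 hDt1 hD2 hDt2 x (u x) (v x) (w x),
      BnAux.A_secs E J D Dt hD1 hDt1 hD2 hDt2 hu hv hw x]
    simp only [BnAux.del, map_sub, LinearMap.sub_apply]
    ring
end
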